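/- arXiv:0806.4094 — 7 statements merged into one kernel-verified Lean document; each statement's English description precedes it below -/
import Mathlib

section
/- Let E be a complex Banach space and A a bounded operator on E. Every boundary point of the spectrum of A that is not an isolated point of the spectrum belongs to the essential spectrum of A (the set of λ such that A - λ is not Fredholm). -/
open Module

/-- A bounded operator between Banach spaces is Fredholm if its range is closed and its
kernel and cokernel are finite-dimensional. -/
def IsFredholm {E F : Type*} [NormedAddCommGroup E] [NormedSpace ℂ E]
    [NormedAddCommGroup F] [NormedSpace ℂ F] (T : E →L[ℂ] F) : Prop :=
  IsClosed (LinearMap.range (T : E →ₗ[ℂ] F) : Set F) ∧ FiniteDimensional ℂ (LinearMap.ker (T : E →ₗ[ℂ] F)) ∧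
    FiniteDimensional ℂ (F ⧸ LinearMap.range (T : E →ₗ[ℂ] F))

/-- The essential spectrum of a bounded operator. -/
def essSpectrum {E : Type*} [NormedAddCommGroup E] [NormedSpace ℂ E]
    (A : E →L[ℂ] E) : Set ℂ :=
  {z | ¬ IsFredholm (A - algebraMap ℂ (E →L[ℂ] E) z)}

private lemma isUnit_one_sub_swap {R : Type*} [Ring R] {x y : R} (h : IsUnit (1 - x * y)) :
    IsUnit (1 - y * x) := by
  refine ⟨⟨1 - y * x, 1 + y * h.unit.inv * x, ?_, ?_⟩, rfl⟩
  · calc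
      (1 - y * x) * (1 + y * (IsUnit.unit h).inv * x) =
          1 - y * x + y * ((1 - x * y) * h.unit.inv) * x := by noncomm_ring
      _ = 1 := by simp only [Units.inv_eq_val_inv, IsUnit.mul_val_inv, mul_one, sub_add_cancel]
  · calc
      (1 + y * (IsUnit.unit h).inv * x) * (1 - y * x) =
          1 - y * x + y * (h.unit.inv * (1 - x * y)) * x := by noncomm_ring
      _ = 1 := by simp only [Units.inv_eq_val_inv, IsUnit.val_inv_mul, mul_one, sub_add_cancel]

private lemma clm_isUnit_iff {E : Type*} [NormedAddCommGroup E] [NormedSpace ℂ E]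
    [CompleteSpace E] {f : E →L[ℂ] E} :
    IsUnit f ↔ Function.Bijective f := by
  constructor
  · rintro ⟨u, rfl⟩
    exact Function.bijective_iff_has_inverse.mpr ⟨u.inv,
      fun x => show (u.inv * u.val) x = x by rw [Units.inv_eq_val_inv, u.inv_mul]; rfl,
      fun x => show (u.val * u.inv) x = x by rw [Units.inv_eq_val_inv, u.mul_inv]; rfl⟩
  · intro h
    let e := ContinuousLinearEquiv.ofBijective f (LinearMap.ker_eq_bot.mpr h.1)
      (LinearMap.range_eq_top.mpr h.2)
    have he : ∀ x, e x = f x := fun x => rfl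
    refine ⟨⟨f, (e.symm : E →L[ℂ] E), ?_, ?_⟩, rfl⟩
    · ext x
      simp only [ContinuousLinearMap.mul_apply, ContinuousLinearMap.coe_mk',
        ContinuousLinearMap.one_apply, ContinuousLinearEquiv.coe_coe]
      rw [← he]
      exact e.apply_symm_apply x
    · ext x
      simp only [ContinuousLinearMap.mul_apply, ContinuousLinearMap.one_apply,
        ContinuousLinearEquiv.coe_coe]
      rw [← he]
      exact e.symm_apply_apply x

private lemma det_ne_zero_iff' {N : Type*} [AddCommGroup N] [Module ℂ N] [FiniteDimensional ℂ N]
    (f : N →ₗ[ℂ] N) : LinearMap.det f ≠ 0 ↔ Function.Bijective f := by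
  constructor
  · intro hd
    let b := Module.finBasis ℂ N
    have hM : IsUnit (LinearMap.toMatrix b b f) := by
      rw [Matrix.isUnit_iff_isUnit_det, isUnit_iff_ne_zero, LinearMap.det_toMatrix]
      exact hd
    have hf : IsUnit f := by
      have := hM.map (LinearMap.toMatrixAlgEquiv b).symm.toRingEquiv
      simpa [LinearMap.toMatrixAlgEquiv] using this
    exact ⟨LinearMap.ker_eq_bot.mp ((LinearMap.isUnit_iff_ker_eq_bot f).mp hf),
      LinearMap.range_eq_top.mp ((LinearMap.isUnit_iff_range_eq_top f).mp hf)⟩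
  · intro hb
    exact isUnit_iff_ne_zero.mp (f.isUnit_det
      ((LinearMap.isUnit_iff_ker_eq_bot f).mpr (LinearMap.ker_eq_bot.mpr hb.1)))

private lemma analyticAt_matrix_det {n : ℕ} {M : ℂ → Matrix (Fin n) (Fin n) ℂ}
    (h : ∀ i j, AnalyticAt ℂ (fun w => M w i j) 0) :
    AnalyticAt ℂ (fun w => (M w).det) 0 := by
  have e : (fun w => (M w).det)
      = fun w => ∑ σ : Equiv.Perm (Fin n), (Equiv.Perm.sign σ : ℂ) * ∏ i, M w (σ i) i := by
    ext w
    rw [Matrix.det_apply']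
  rw [e]
  exact Finset.analyticAt_fun_sum _ (fun σ _ =>
    analyticAt_const.mul (Finset.analyticAt_fun_prod _ (fun i _ => h (σ i) i)))

private lemma bijective_one_sub_swap {E N : Type*} [AddCommGroup E] [AddCommGroup N]
    (ι : N →+ E) (hι : Function.Injective ι) (C : E →+ N) :
    Function.Bijective (fun x => x - ι (C x)) ↔
      Function.Bijective (fun y : N => y - C (ι y)) := by
  constructor
  · rintro ⟨hinj, hsurj⟩
    constructor
    · intro y y' hyy'
      refine hι (hinj ?_)
      show ι y - ι (C (ι y)) = ι y' - ι (C (ι y'))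
      simp only [← map_sub]
      rw [show y - C (ι y) = y' - C (ι y') from hyy']
    · intro y
      obtain ⟨x, hx⟩ := hsurj (ι y)
      have hx' : x = ι y + ι (C x) := sub_eq_iff_eq_add.mp hx
      have hxval : x = ι (y + C x) := by rw [map_add]; exact hx'
      have h2 : C (ι (y + C x)) = C x := by rw [← hxval]
      refine ⟨y + C x, ?_⟩
      show y + C x - C (ι (y + C x)) = y
      rw [h2, add_sub_cancel_right]
  · rintro ⟨hinj, hsurj⟩
    constructor
    · intro x x' hxx'
      have hd : (x - x') - ι (C (x - x')) = 0 := by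
        simp only [map_sub]
        rw [sub_sub_sub_comm]
        exact sub_eq_zero_of_eq hxx'
      have h1 : x - x' = ι (C (x - x')) := sub_eq_zero.mp hd
      have h2 : C (x - x') - C (ι (C (x - x'))) = 0 := by
        rw [← h1, sub_self]
      have h3 : (fun y : N => y - C (ι y)) (C (x - x')) = (fun y : N => y - C (ι y)) 0 := by
        simpa using h2
      have h4 : C (x - x') = 0 := hinj h3
      have : x - x' = 0 := by rw [h1, h4, map_zero]
      exact sub_eq_zero.mp this
    · intro e
      obtain ⟨u, hu⟩ := hsurj (C e)
      have hu' : u - C (ι u) = C e := hu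
      refine ⟨e + ι u, ?_⟩
      show e + ι u - ι (C (e + ι u)) = e
      rw [map_add, map_add, ← hu']
      simp only [map_sub]
      abel

private lemma exists_ker_equiv
    {E : Type*} [NormedAddCommGroup E] [NormedSpace ℂ E] [CompleteSpace E]
    (T : E →L[ℂ] E) (P : E →L[ℂ] (LinearMap.ker (T : E →ₗ[ℂ] E))) (hP : ∀ x : LinearMap.ker (T : E →ₗ[ℂ] E), P x = x)
    (N : Submodule ℂ E) (hN : IsCompl (LinearMap.range (T : E →ₗ[ℂ] E)) N)
    [FiniteDimensional ℂ N] :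
    ∃ ε > 0, ∀ S : E →L[ℂ] E, Function.Bijective S → ‖S - T‖ < ε →
      Nonempty ((LinearMap.ker (T : E →ₗ[ℂ] E)) ≃ₗ[ℂ] N) := by
  classical
  set M : Submodule ℂ E := LinearMap.ker (P : E →ₗ[ℂ] (LinearMap.ker (T : E →ₗ[ℂ] E))) with hM
  have hMmem : ∀ x : E, x ∈ M ↔ P x = 0 := fun x => Iff.rfl
  have hMclosed : IsClosed (M : Set E) := ContinuousLinearMap.isClosed_ker P
  haveI : CompleteSpace M := hMclosed.completeSpace_coe
  haveI : CompleteSpace N := FiniteDimensional.complete ℂ N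
  set Φ : (E →L[ℂ] E) → (M × N →L[ℂ] E) :=
    fun B => (B.comp M.subtypeL).coprod N.subtypeL with hΦ
  have hΦapply : ∀ B (p : M × N), Φ B p = B p.1 + p.2.1 := fun B p => rfl
  have hPT : ∀ x : E, T ((P x : E)) = 0 := fun x => LinearMap.mem_ker.mp (P x).2
  -- `Φ T` is bijective
  have hΦTbij : Function.Bijective (Φ T) := by
    constructor
    · intro p q hpq
      rw [hΦapply, hΦapply] at hpq
      set d : E := (p.1 : E) - q.1 with hd
      set n : E := (p.2 : E) - q.2 with hn
      have h1 : T d + n = 0 := by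
        rw [hd, hn, map_sub, sub_add_sub_comm, hpq, sub_self]
      have hdN : T d ∈ N := by
        have he : T d = -n := eq_neg_of_add_eq_zero_left h1
        rw [he]; exact N.neg_mem (N.sub_mem p.2.2 q.2.2)
      have hdr : T d ∈ LinearMap.range (T : E →ₗ[ℂ] E) := ⟨d, rfl⟩
      have hTd : T d = 0 := (Submodule.disjoint_def.mp hN.disjoint) _ hdr hdN
      have hn0 : n = 0 := by rwa [hTd, zero_add] at h1
      have hdker : d ∈ LinearMap.ker (T : E →ₗ[ℂ] E) := LinearMap.mem_ker.mpr hTd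
      have hdM : d ∈ M := M.sub_mem p.1.2 q.1.2
      have hd0 : d = 0 := by
        have h2 : (P d : E) = d := congrArg Subtype.val (hP ⟨d, hdker⟩)
        have h3 : P d = 0 := (hMmem d).mp hdM
        rw [← h2, h3, Submodule.coe_zero]
      exact Prod.ext (Subtype.ext (sub_eq_zero.mp hd0)) (Subtype.ext (sub_eq_zero.mp hn0))
    · intro e
      obtain ⟨r, y, hr, hy, hry⟩ := Submodule.codisjoint_iff_exists_add_eq.mp hN.codisjoint e
      obtain ⟨x, hx⟩ := hr
      have hu : x - (P x : E) ∈ M := by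
        rw [hMmem, map_sub, hP (P x), sub_self]
      have hTu : T (x - (P x : E)) = r := by
        rw [map_sub, hPT x, sub_zero]; exact hx
      refine ⟨(⟨x - P x, hu⟩, ⟨y, hy⟩), ?_⟩
      rw [hΦapply]; exact hry ▸ (by rw [hTu])
  -- upgrade to a continuous linear equiv
  let eT := ContinuousLinearEquiv.ofBijective (Φ T) (LinearMap.ker_eq_bot.mpr hΦTbij.1)
    (LinearMap.range_eq_top.mpr hΦTbij.2)
  have heT : ∀ p, eT p = Φ T p := fun p => rfl
  set c : ℝ := ‖(eT.symm : E →L[ℂ] (M × N))‖ with hc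
  have hc0 : 0 ≤ c := norm_nonneg _
  refine ⟨(c + 1)⁻¹, by positivity, ?_⟩
  intro S hSbij hST
  -- `Φ S` is bijective
  have hΔ : ‖Φ S - Φ T‖ ≤ ‖S - T‖ := by
    refine ContinuousLinearMap.opNorm_le_bound _ (norm_nonneg _) (fun p => ?_)
    have h1 : (Φ S - Φ T) p = (S - T) (p.1 : E) := by
      simp only [ContinuousLinearMap.sub_apply, hΦapply]
      abel
    rw [h1]
    calc ‖(S - T) (p.1 : E)‖ ≤ ‖S - T‖ * ‖(p.1 : E)‖ := (S - T).le_opNorm _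
      _ ≤ ‖S - T‖ * ‖p‖ := by
          exact mul_le_mul_of_nonneg_left (norm_fst_le p) (norm_nonneg _)
  set W : E →L[ℂ] E := 1 + (Φ S - Φ T).comp (eT.symm : E →L[ℂ] (M × N)) with hW
  have hWunit : IsUnit W := by
    have hx : ‖-((Φ S - Φ T).comp (eT.symm : E →L[ℂ] (M × N)))‖ < 1 := by
      rw [norm_neg]
      calc ‖(Φ S - Φ T).comp (eT.symm : E →L[ℂ] (M × N))‖ ≤ ‖Φ S - Φ T‖ * c :=
            ContinuousLinearMap.opNorm_comp_le _ _
        _ ≤ ‖S - T‖ * c := mul_le_mul_of_nonneg_right hΔ hc0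
        _ < (c + 1)⁻¹ * (c + 1) := by
            apply mul_lt_mul' (le_of_lt (lt_of_le_of_lt (le_refl _) hST)) (by linarith) hc0 ?_
            · positivity
        _ = 1 := by field_simp
    have := isUnit_one_sub_of_norm_lt_one hx
    rwa [sub_neg_eq_add] at this
  -- `Φ S` is bijective
  have hΦSW : ∀ p, Φ S p = W (eT p) := by
    intro p
    have hWe : W (eT p) = eT p + (Φ S) p - (Φ T) p := by
      rw [hW]
      simp only [ContinuousLinearMap.add_apply, ContinuousLinearMap.one_apply,
        ContinuousLinearMap.comp_apply, ContinuousLinearEquiv.coe_coe,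
        eT.symm_apply_apply, ContinuousLinearMap.sub_apply]
      abel
    rw [hWe, heT]
    abel
  have hΦSbij : Function.Bijective (Φ S) := by
    have : ⇑(Φ S) = ⇑W ∘ ⇑eT := funext hΦSW
    rw [this]
    exact Function.Bijective.comp (clm_isUnit_iff.mp hWunit) eT.bijective
  -- build the equivalence `ker T ≃ N`
  let ΦSe : (M × N) ≃ₗ[ℂ] E := LinearEquiv.ofBijective (Φ S : M × N →ₗ[ℂ] E) hΦSbij
  have hΦSe : ∀ (p : M × N), ΦSe p = S p.1 + p.2.1 := fun p => rfl
  let g : LinearMap.ker (T : E →ₗ[ℂ] E) →ₗ[ℂ] N :=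
    (LinearMap.snd ℂ M N) ∘ₗ (ΦSe.symm.toLinearMap) ∘ₗ
      ((S : E →ₗ[ℂ] E).comp (LinearMap.ker (T : E →ₗ[ℂ] E)).subtype)
  have hg : ∀ k : LinearMap.ker (T : E →ₗ[ℂ] E), g k = (ΦSe.symm (S (k : E))).2 := fun k => rfl
  have hginj : Function.Injective g := by
    rw [← LinearMap.ker_eq_bot, LinearMap.ker_eq_bot']
    intro k hk
    have h2' : ΦSe (ΦSe.symm (S (k : E))) = S (k : E) := ΦSe.apply_symm_apply _
    rw [hΦSe] at h2'
    have hp2 : (ΦSe.symm (S (k : E))).2 = 0 := by rw [← hg]; exact hk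
    rw [hp2] at h2'
    have h3 : S (((ΦSe.symm (S (k : E))).1 : E)) = S (k : E) := by simpa using h2'
    have h4 : (((ΦSe.symm (S (k : E))).1 : M) : E) = (k : E) := hSbij.1 h3
    have h5 : P (k : E) = k := hP k
    have h6 : P (((ΦSe.symm (S (k : E))).1 : M) : E) = 0 :=
      (hMmem _).mp (ΦSe.symm (S (k : E))).1.2
    rw [← h5, ← h4, h6]
  have hgsurj : Function.Surjective g := by
    intro y
    obtain ⟨x, hx⟩ := hSbij.2 (y : E)
    have hxm : x - (P x : E) ∈ M := by rw [hMmem, map_sub, hP (P x), sub_self]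
    refine ⟨P x, ?_⟩
    have hkey : ΦSe (⟨-(x - (P x : E)), M.neg_mem hxm⟩, y) = S ((P x : E)) := by
      rw [hΦSe]
      show S (-(x - (P x : E))) + (y : E) = S ((P x : E))
      rw [map_neg, map_sub, hx]
      abel
    have hsymm : ΦSe.symm (S ((P x : E))) = (⟨-(x - (P x : E)), M.neg_mem hxm⟩, y) :=
      (LinearEquiv.symm_apply_eq ΦSe).mpr hkey.symm
    rw [hg, hsymm]
  exact ⟨LinearEquiv.ofBijective g ⟨hginj, hgsurj⟩⟩

private lemma exists_correction
    {E : Type*} [NormedAddCommGroup E] [NormedSpace ℂ E] [CompleteSpace E]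
    (T : E →L[ℂ] E) [FiniteDimensional ℂ (LinearMap.ker (T : E →ₗ[ℂ] E))]
    (P : E →L[ℂ] (LinearMap.ker (T : E →ₗ[ℂ] E))) (hP : ∀ x : LinearMap.ker (T : E →ₗ[ℂ] E), P x = x)
    (N : Submodule ℂ E) (hN : IsCompl (LinearMap.range (T : E →ₗ[ℂ] E)) N)
    (e0 : (LinearMap.ker (T : E →ₗ[ℂ] E)) ≃ₗ[ℂ] N) :
    ∃ C : E →L[ℂ] N, IsUnit (T + N.subtypeL.comp C) := by
  set C : E →L[ℂ] N := (LinearMap.toContinuousLinearMap e0.toLinearMap).comp P with hCdef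
  have hC : ∀ x : E, C x = e0 (P x) := by
    intro x
    rw [hCdef]
    simp [LinearMap.coe_toContinuousLinearMap']
  refine ⟨C, clm_isUnit_iff.mpr ⟨?_, ?_⟩⟩
  · -- injective
    have hker0 : ∀ x, (T + N.subtypeL.comp C) x = 0 → x = 0 := ?_
    · intro a b hab
      have : (T + N.subtypeL.comp C) (a - b) = 0 := by rw [map_sub, hab, sub_self]
      exact sub_eq_zero.mp (hker0 _ this)
    intro x hx
    have hx' : T x + ((C x : N) : E) = 0 := hx
    have h1 : T x ∈ N := by
      have : T x = -((C x : N) : E) := eq_neg_of_add_eq_zero_left hx'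
      rw [this]; exact N.neg_mem (C x).2
    have h2 : T x = 0 := (Submodule.disjoint_def.mp hN.disjoint) _ ⟨x, rfl⟩ h1
    have h3 : (C x : E) = 0 := by rwa [h2, zero_add] at hx'
    have h4 : C x = 0 := Subtype.ext h3
    have h5 : P x = 0 := by
      have := h4
      rw [hC] at this
      simpa using e0.injective (by rw [this, map_zero])
    have h6 : P x = ⟨x, LinearMap.mem_ker.mpr h2⟩ := hP ⟨x, LinearMap.mem_ker.mpr h2⟩
    have : (⟨x, LinearMap.mem_ker.mpr h2⟩ : LinearMap.ker (T : E →ₗ[ℂ] E)) = 0 := by rw [← h6, h5]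
    exact congrArg Subtype.val this
  · -- surjective
    intro e
    obtain ⟨r, y, hr, hy, hry⟩ := Submodule.codisjoint_iff_exists_add_eq.mp hN.codisjoint e
    obtain ⟨x, hx⟩ := hr
    set u : E := x - (P x : E) with hu
    have hPu : P u = 0 := by rw [hu, map_sub, hP (P x), sub_self]
    have hTu : T u = r := by
      rw [hu, map_sub, show T (P x : E) = 0 from LinearMap.mem_ker.mp (P x).2, sub_zero]; exact hx
    set k : LinearMap.ker (T : E →ₗ[ℂ] E) := e0.symm ⟨y, hy⟩ with hk
    refine ⟨u + (k : E), ?_⟩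
    have hTk : T (k : E) = 0 := LinearMap.mem_ker.mp k.2
    have hPk : P (k : E) = k := hP k
    have hCu : C u = 0 := by rw [hC, hPu, map_zero]
    have hCk : C (k : E) = ⟨y, hy⟩ := by rw [hC, hPk, hk, e0.apply_symm_apply]
    show T (u + (k : E)) + ((C (u + (k : E)) : N) : E) = e
    rw [map_add, map_add, hTu, hTk, hCu, hCk]
    rw [← hry]
    push_cast
    abel

private lemma punctured_isolated
    {E : Type*} [NormedAddCommGroup E] [NormedSpace ℂ E] [CompleteSpace E]
    (A : E →L[ℂ] E) (l : ℂ) (N : Submodule ℂ E) [FiniteDimensional ℂ N]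
    (C : E →L[ℂ] N)
    (hV : IsUnit ((A - algebraMap ℂ (E →L[ℂ] E) l) + N.subtypeL.comp C))
    (hfr : l ∈ closure ((spectrum ℂ A)ᶜ)) (hσ : l ∈ spectrum ℂ A) :
    ∃ U : Set ℂ, IsOpen U ∧ U ∩ spectrum ℂ A = {l} := by
  classical
  set T : E →L[ℂ] E := A - algebraMap ℂ (E →L[ℂ] E) l with hT
  set K : E →L[ℂ] E := N.subtypeL.comp C with hK
  set V : E →L[ℂ] E := T + K with hVdef
  set Vi : E →L[ℂ] E := Ring.inverse V with hVi
  set r0 : ℝ := (‖Vi‖ + 1)⁻¹ with hr0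
  have hr0pos : 0 < r0 := by positivity
  -- for small w, V - w • 1 is a unit
  have hUw : ∀ w : ℂ, ‖w‖ < r0 → IsUnit (V - w • (1 : E →L[ℂ] E)) := by
    intro w hw
    have h1 : IsUnit (1 - w • Vi) := by
      apply isUnit_one_sub_of_norm_lt_one
      calc ‖w • Vi‖ ≤ ‖w‖ * ‖Vi‖ := ContinuousLinearMap.opNorm_smul_le _ _
        _ ≤ r0 * ‖Vi‖ := mul_le_mul_of_nonneg_right hw.le (norm_nonneg _)
        _ < 1 := by
            rw [hr0]
            rw [inv_mul_lt_iff₀ (by positivity)]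
            linarith [norm_nonneg Vi]
    have h2 : V * (1 - w • Vi) = V - w • (1 : E →L[ℂ] E) := by
      rw [mul_sub, mul_one, mul_smul_comm, Ring.mul_inverse_cancel V hV]
    rw [← h2]
    exact hV.mul h1
  set R : ℂ → (E →L[ℂ] E) := fun w => Ring.inverse (V - w • (1 : E →L[ℂ] E)) with hR
  set hlin : ℂ → (N →ₗ[ℂ] N) :=
    fun w => LinearMap.id - ((C.comp ((R w).comp N.subtypeL)) : N →ₗ[ℂ] N) with hhlin
  set f : ℂ → ℂ := fun w => LinearMap.det (hlin w) with hf
  -- the key equivalence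
  have hkey : ∀ w : ℂ, ‖w‖ < r0 → ((l + w) ∉ spectrum ℂ A ↔ f w ≠ 0) := by
    intro w hw
    rw [spectrum.notMem_iff]
    have e1 : algebraMap ℂ (E →L[ℂ] E) (l + w) - A = -(T - w • (1 : E →L[ℂ] E)) := by
      rw [hT, map_add, Algebra.algebraMap_eq_smul_one w]
      abel
    rw [e1, IsUnit.neg_iff]
    have e2 : T - w • (1 : E →L[ℂ] E) = (V - w • 1) - K := by rw [hVdef]; abel
    rw [e2]
    set u := (hUw w hw).unit with hu
    have hu1 : (u : E →L[ℂ] E) = V - w • 1 := rfl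
    have hRu : (V - w • (1 : E →L[ℂ] E)) * R w = 1 := Ring.mul_inverse_cancel _ (hUw w hw)
    have e3 : (V - w • (1 : E →L[ℂ] E)) - K = u * (1 - R w * K) := by
      rw [mul_sub, mul_one, hu1, ← mul_assoc, hRu, one_mul]
    rw [e3, Units.isUnit_units_mul]
    have hiff1 : IsUnit (1 - R w * K) ↔ IsUnit (1 - K * R w) :=
      ⟨isUnit_one_sub_swap, isUnit_one_sub_swap⟩
    rw [hiff1, clm_isUnit_iff]
    set ι : N →+ E := N.subtype.toAddMonoidHom with hι
    have hιinj : Function.Injective ι := by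
      have : ⇑ι = fun y : N => (y : E) := rfl
      rw [this]
      exact Subtype.val_injective
    set Cm : E →+ N := (C.comp (R w)).toLinearMap.toAddMonoidHom with hCm
    have hfun : ⇑(1 - K * R w) = fun x => x - ι (Cm x) := by
      funext x
      show (1 - K * R w) x = x - ((C ((R w) x) : N) : E)
      simp [hK, ContinuousLinearMap.sub_apply, ContinuousLinearMap.mul_apply]
    rw [hfun, bijective_one_sub_swap ι hιinj Cm]
    have hfun2 : (fun y : N => y - Cm (ι y)) = ⇑(hlin w) := by
      funext y
      show y - C ((R w) (y : E)) = hlin w y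
      rw [hhlin]
      simp [LinearMap.sub_apply]
    rw [hfun2, ← det_ne_zero_iff']
  -- analyticity of f at 0
  have hRan : AnalyticAt ℂ R 0 := by
    have h1 : AnalyticAt ℂ (fun w : ℂ => V - w • (1 : E →L[ℂ] E)) 0 :=
      analyticAt_const.sub (analyticAt_id.smul analyticAt_const)
    have h2 : AnalyticAt ℂ (Ring.inverse : (E →L[ℂ] E) → (E →L[ℂ] E))
        ((fun w : ℂ => V - w • (1 : E →L[ℂ] E)) 0) := by
      have he0 : (fun w : ℂ => V - w • (1 : E →L[ℂ] E)) 0 = (hV.unit : E →L[ℂ] E) := by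
        simp [IsUnit.unit_spec]
      rw [he0]
      exact analyticAt_inverse (𝕜 := ℂ) hV.unit
    exact AnalyticAt.comp (g := (Ring.inverse : (E →L[ℂ] E) → (E →L[ℂ] E)))
      (f := fun w : ℂ => V - w • (1 : E →L[ℂ] E)) h2 h1
  set n : ℕ := finrank ℂ N with hn
  set b : Basis (Fin n) ℂ N := finBasis ℂ N with hb
  have hfan : AnalyticAt ℂ f 0 := by
    have hfdet : f = fun w => (LinearMap.toMatrix b b (hlin w)).det := by
      funext w
      show LinearMap.det (hlin w) = ((LinearMap.toMatrix b b) (hlin w)).det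
      rw [LinearMap.det_toMatrix b]
    rw [hfdet]
    apply analyticAt_matrix_det
    intro i j
    have hentry : ∀ w, LinearMap.toMatrix b b (hlin w) i j
        = (if j = i then 1 else 0)
          - (LinearMap.toContinuousLinearMap (b.coord i)).comp
              (C.comp (ContinuousLinearMap.apply ℂ E ((b j : N) : E))) (R w) := by
      intro w
      rw [LinearMap.toMatrix_apply, hhlin]
      simp only [LinearMap.sub_apply, LinearMap.id_apply, map_sub, Finsupp.sub_apply]
      congr 1
      rw [b.repr_self_apply]
    have : (fun w => LinearMap.toMatrix b b (hlin w) i j)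
        = fun w => (if j = i then (1:ℂ) else 0)
          - (LinearMap.toContinuousLinearMap (b.coord i)).comp
              (C.comp (ContinuousLinearMap.apply ℂ E ((b j : N) : E))) (R w) := funext hentry
    rw [this]
    exact analyticAt_const.sub
      ((((LinearMap.toContinuousLinearMap (b.coord i)).comp
        (C.comp (ContinuousLinearMap.apply ℂ E ((b j : N) : E)))).analyticAt _).comp hRan)
  -- f is not identically zero near 0
  have hnotzero : ¬ (∀ᶠ w in nhds 0, f w = 0) := by
    intro hev
    obtain ⟨δ, hδpos, hδ⟩ := Metric.eventually_nhds_iff.mp hev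
    obtain ⟨μ, hμ, hμd⟩ := Metric.mem_closure_iff.mp hfr (min δ r0) (lt_min hδpos hr0pos)
    have hμl : ‖μ - l‖ < min δ r0 := by
      rw [← dist_eq_norm]
      rw [dist_comm]
      exact hμd
    have h1 : f (μ - l) ≠ 0 := by
      have := (hkey (μ - l) (lt_of_lt_of_le hμl (min_le_right _ _))).mp
      rw [add_sub_cancel] at this
      exact this hμ
    have h2 : f (μ - l) = 0 := by
      apply hδ
      rw [dist_eq_norm, sub_zero]
      exact lt_of_lt_of_le hμl (min_le_left _ _)
    exact h1 h2
  have hne : ∀ᶠ w in nhdsWithin 0 {0}ᶜ, f w ≠ 0 :=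
    (hfan.eventually_eq_zero_or_eventually_ne_zero).resolve_left hnotzero
  rw [eventually_nhdsWithin_iff] at hne
  obtain ⟨δ, hδpos, hδ⟩ := Metric.eventually_nhds_iff.mp hne
  refine ⟨Metric.ball l (min δ r0), Metric.isOpen_ball, ?_⟩
  apply Set.eq_singleton_iff_unique_mem.mpr
  constructor
  · exact ⟨Metric.mem_ball_self (lt_min hδpos hr0pos), hσ⟩
  · rintro z ⟨hz1, hz2⟩
    by_contra hzl
    rw [Metric.mem_ball, dist_eq_norm] at hz1
    have hw1 : ‖z - l‖ < δ := lt_of_lt_of_le hz1 (min_le_left _ _)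
    have hw2 : ‖z - l‖ < r0 := lt_of_lt_of_le hz1 (min_le_right _ _)
    have hfz : f (z - l) ≠ 0 := by
      apply hδ
      · rw [dist_eq_norm, sub_zero]; exact hw1
      · simp only [Set.mem_compl_iff, Set.mem_singleton_iff]
        exact sub_ne_zero_of_ne hzl
    have : (l + (z - l)) ∉ spectrum ℂ A := (hkey (z - l) hw2).mpr hfz
    rw [add_sub_cancel] at this
    exact this hz2

/-- Every boundary point of the spectrum which is not an isolated point of the spectrum
belongs to the essential spectrum. -/
theorem frontier_spectrum_subset_essSpectrum
    {E : Type*} [NormedAddCommGroup E] [NormedSpace ℂ E] [CompleteSpace E]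
    (A : E →L[ℂ] E) :
    frontier (spectrum ℂ A) \
        {z | z ∈ spectrum ℂ A ∧ ∃ U : Set ℂ, IsOpen U ∧ U ∩ spectrum ℂ A = {z}} ⊆
      essSpectrum A := by
  intro l hl
  obtain ⟨hfr, hniso⟩ := hl
  have hlσ : l ∈ spectrum ℂ A := by
    have h1 := frontier_subset_closure hfr
    rwa [IsClosed.closure_eq (spectrum.isClosed (𝕜 := ℂ) A)] at h1
  have hlc : l ∈ closure ((spectrum ℂ A)ᶜ) := by
    rw [frontier_eq_closure_inter_closure] at hfr
    exact hfr.2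
  show ¬ IsFredholm _
  intro hF
  set T : E →L[ℂ] E := A - algebraMap ℂ (E →L[ℂ] E) l with hT
  obtain ⟨-, hker, hcok⟩ := hF
  haveI : FiniteDimensional ℂ (LinearMap.ker (T : E →ₗ[ℂ] E)) := hker
  obtain ⟨P, hP⟩ := Submodule.ClosedComplemented.of_finiteDimensional (LinearMap.ker (T : E →ₗ[ℂ] E))
  obtain ⟨N, hN⟩ := Submodule.exists_isCompl (LinearMap.range (T : E →ₗ[ℂ] E))
  haveI : FiniteDimensional ℂ (E ⧸ LinearMap.range (T : E →ₗ[ℂ] E)) := hcok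
  haveI : FiniteDimensional ℂ N :=
    (Submodule.quotientEquivOfIsCompl _ N hN).finiteDimensional
  obtain ⟨ε, hε, hSeq⟩ := exists_ker_equiv T P hP N hN
  obtain ⟨μ, hμcompl, hμd⟩ := Metric.mem_closure_iff.mp hlc ε hε
  set S : E →L[ℂ] E := A - algebraMap ℂ (E →L[ℂ] E) μ with hSdef
  have hSbij : Function.Bijective S := by
    apply clm_isUnit_iff.mp
    have h2 := spectrum.notMem_iff.mp hμcompl
    have h3 : algebraMap ℂ (E →L[ℂ] E) μ - A = -S := by rw [hSdef]; abel
    rw [h3, IsUnit.neg_iff] at h2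
    exact h2
  have hST : ‖S - T‖ < ε := by
    have h4 : S - T = (l - μ) • (1 : E →L[ℂ] E) := by
      rw [hSdef, hT, ← Algebra.algebraMap_eq_smul_one, map_sub]
      abel
    rw [h4]
    calc ‖(l - μ) • (1 : E →L[ℂ] E)‖ ≤ ‖l - μ‖ * ‖(1 : E →L[ℂ] E)‖ :=
          ContinuousLinearMap.opNorm_smul_le _ _
      _ ≤ ‖l - μ‖ * 1 := by
          refine mul_le_mul_of_nonneg_left ?_ (norm_nonneg _)
          rw [ContinuousLinearMap.one_def]
          exact ContinuousLinearMap.norm_id_le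
      _ = dist l μ := by rw [mul_one, dist_eq_norm]
      _ < ε := hμd
  obtain ⟨e0⟩ := hSeq S hSbij hST
  obtain ⟨Ccorr, hVunit⟩ := exists_correction T P hP N hN e0
  obtain ⟨U, hU, hUσ⟩ := punctured_isolated A l N Ccorr hVunit hlc hlσ
  exact hniso ⟨hlσ, U, hU, hUσ⟩
end

section
/- Let A be an essentially hyperbolic bounded operator on a complex Banach space and let λ be a point of σ(A) on the imaginary axis. Then λ is an isolated eigenvalue of A and A - λ is a Fredholm operator of index 0. -/
open Module

/-- The Fredholm index of a bounded operator. -/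
noncomputable def fredIndex {E F : Type*} [NormedAddCommGroup E] [NormedSpace ℂ E]
    [NormedAddCommGroup F] [NormedSpace ℂ F] (T : E →L[ℂ] F) : ℤ :=
  (finrank ℂ (LinearMap.ker (T : E →ₗ[ℂ] F)) : ℤ) - finrank ℂ (F ⧸ LinearMap.range (T : E →ₗ[ℂ] F))

section CoupleTest

variable {E : Type*} [NormedAddCommGroup E] [NormedSpace ℂ E] [CompleteSpace E]

section Aux

variable {E : Type*} [NormedAddCommGroup E] [NormedSpace ℂ E] [CompleteSpace E]

lemma algMap_apply (z : ℂ) (x : E) : (algebraMap ℂ (E →L[ℂ] E) z) x = z • x := by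
  rw [Algebra.algebraMap_eq_smul_one]
  rfl

lemma isUnit_iff_bijective (T : E →L[ℂ] E) : IsUnit T ↔ Function.Bijective T := by
  constructor
  · rintro ⟨u, rfl⟩
    have h1 : Function.LeftInverse (u⁻¹ : (E →L[ℂ] E)ˣ).1 u.1 := fun x =>
      congrArg (fun f : E →L[ℂ] E => f x) u.inv_mul
    have h2 : Function.RightInverse (u⁻¹ : (E →L[ℂ] E)ˣ).1 u.1 := fun x =>
      congrArg (fun f : E →L[ℂ] E => f x) u.mul_inv
    exact ⟨h1.injective, h2.surjective⟩
  · intro hbij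
    let e := ContinuousLinearEquiv.ofBijective T (LinearMap.ker_eq_bot.2 hbij.1)
      (LinearMap.range_eq_top.2 hbij.2)
    refine ⟨⟨T, (e.symm : E →L[ℂ] E), ?_, ?_⟩, rfl⟩
    · ext x; exact e.apply_symm_apply x
    · ext x; exact e.symm_apply_apply x

lemma mem_spectrum_iff_not_bijective (A : E →L[ℂ] E) (z : ℂ) :
    z ∈ spectrum ℂ A ↔ ¬ Function.Bijective (A - algebraMap ℂ (E →L[ℂ] E) z) := by
  rw [spectrum.mem_iff, ← isUnit_iff_bijective]
  constructor
  · intro h hu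
    exact h (by simpa using hu.neg)
  · intro h hu
    exact h (by simpa using hu.neg)

lemma bijective_of_not_mem_spectrum {A : E →L[ℂ] E} {z : ℂ} (h : z ∉ spectrum ℂ A) :
    Function.Bijective (A - algebraMap ℂ (E →L[ℂ] E) z) := by
  by_contra hb
  exact h ((mem_spectrum_iff_not_bijective A z).2 hb)

lemma fredholm_of_bijective {T : E →L[ℂ] E} (h : Function.Bijective T) :
    IsFredholm T ∧ fredIndex T = 0 := by
  have hker : LinearMap.ker (T : E →ₗ[ℂ] E) = ⊥ := LinearMap.ker_eq_bot.2 h.1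
  have hrange : LinearMap.range (T : E →ₗ[ℂ] E) = ⊤ := LinearMap.range_eq_top.2 h.2
  have hsub : Subsingleton (E ⧸ LinearMap.range (T : E →ₗ[ℂ] E)) :=
    Submodule.Quotient.subsingleton_iff.2 hrange
  constructor
  · refine ⟨?_, ?_, ?_⟩
    · rw [hrange]; simpa using isClosed_univ
    · rw [hker]; infer_instance
    · exact Module.Finite.of_finite
  · have h1 : finrank ℂ (LinearMap.ker (T : E →ₗ[ℂ] E)) = 0 := by rw [hker]; simp
    have h2 : finrank ℂ (E ⧸ LinearMap.range (T : E →ₗ[ℂ] E)) = 0 := by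
      exact Module.finrank_zero_of_subsingleton
    simp [fredIndex, h1, h2]

end Aux

open ContinuousLinearMap Metric

set_option maxHeartbeats 2000000
set_option synthInstance.maxHeartbeats 200000

lemma couple (A : E →L[ℂ] E) (z₀ : ℂ) (hF : _root_.IsFredholm (A - algebraMap ℂ (E →L[ℂ] E) z₀)) :
    ∃ (r : ℝ) (n m : ℕ) (g : ℂ → ((Fin n → ℂ) →L[ℂ] (Fin m → ℂ))),
      0 < r ∧ AnalyticOnNhd ℂ g (Metric.ball z₀ r) ∧
      ∀ z ∈ Metric.ball z₀ r,
        _root_.IsFredholm (A - algebraMap ℂ (E →L[ℂ] E) z) ∧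
        fredIndex (A - algebraMap ℂ (E →L[ℂ] E) z) = (n : ℤ) - m ∧
        (Function.Bijective (A - algebraMap ℂ (E →L[ℂ] E) z) ↔ Function.Bijective (g z)) := by
  obtain ⟨hcl, hker, hcok⟩ := hF
  set T₀ := A - algebraMap ℂ (E →L[ℂ] E) z₀ with hT₀def
  set n := finrank ℂ (LinearMap.ker (T₀ : E →ₗ[ℂ] E)) with hn
  set m := finrank ℂ (E ⧸ LinearMap.range (T₀ : E →ₗ[ℂ] E)) with hm
  let b : Basis (Fin n) ℂ (LinearMap.ker (T₀ : E →ₗ[ℂ] E)) := finBasis ℂ _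
  let c : Basis (Fin m) ℂ (E ⧸ LinearMap.range (T₀ : E →ₗ[ℂ] E)) := finBasis ℂ _
  -- construction of P
  choose gP hgP _hgP2 using fun i =>
    exists_extension_norm_eq (LinearMap.ker (T₀ : E →ₗ[ℂ] E))
      (LinearMap.toContinuousLinearMap (b.coord i))
  set P : E →L[ℂ] (Fin n → ℂ) := ContinuousLinearMap.pi gP with hPdef
  have hP : ∀ k : LinearMap.ker (T₀ : E →ₗ[ℂ] E), P k = b.equivFun k := by
    intro k
    funext i
    have := hgP i k
    simp only [hPdef, ContinuousLinearMap.pi_apply]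
    rw [this]
    simp [Basis.equivFun_apply, Basis.coord_apply]
  -- construction of J
  set Q := (LinearMap.range (T₀ : E →ₗ[ℂ] E)).mkQ with hQdef
  choose eV heV using fun i => (LinearMap.range (T₀ : E →ₗ[ℂ] E)).mkQ_surjective (c i)
  set J : (Fin m → ℂ) →L[ℂ] E :=
    LinearMap.toContinuousLinearMap (Fintype.linearCombination ℂ eV) with hJdef
  have hJ : ∀ v, J v = ∑ i, v i • eV i := by
    intro v
    simp [hJdef, Fintype.linearCombination_apply]
  have hQJ : ∀ v : Fin m → ℂ, Q (J v) = ∑ i, v i • c i := by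
    intro v
    rw [hJ, map_sum]
    congr 1
    funext i
    rw [map_smul, heV i]
  have hQT : ∀ x : E, Q (T₀ x) = 0 := fun x =>
    (Submodule.Quotient.mk_eq_zero _).2 (LinearMap.mem_range_self _ x)
  -- the family of block operators
  set Bop : ℂ → (E × (Fin m → ℂ)) →L[ℂ] (E × (Fin n → ℂ)) := fun z =>
    ((A - algebraMap ℂ (E →L[ℂ] E) z).comp (fst ℂ E (Fin m → ℂ)) +
      J.comp (snd ℂ E (Fin m → ℂ))).prod (P.comp (fst ℂ E (Fin m → ℂ))) with hBopdef
  have hBop : ∀ z (x : E) (v : Fin m → ℂ),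
      Bop z (x, v) = ((A - algebraMap ℂ (E →L[ℂ] E) z) x + J v, P x) := by
    intro z x v; rfl
  -- bijectivity at z₀
  have hBker : ∀ p : E × (Fin m → ℂ), Bop z₀ p = 0 → p = 0 := by
    rintro ⟨x, v⟩ hp
    rw [hBop] at hp
    have h1 : T₀ x + J v = 0 := congrArg Prod.fst hp
    have h2 : P x = 0 := congrArg Prod.snd hp
    have hv : v = 0 := by
      have h3 : ∑ i, v i • c i = 0 := by
        have h4 : Q (T₀ x + J v) = 0 := by rw [h1, map_zero]
        rwa [map_add, hQT, hQJ, zero_add] at h4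
      funext i
      exact Fintype.linearIndependent_iff.1 c.linearIndependent v h3 i
    subst hv
    rw [map_zero, add_zero] at h1
    have hx : x ∈ LinearMap.ker (T₀ : E →ₗ[ℂ] E) := LinearMap.mem_ker.2 h1
    have h4 : b.equivFun ⟨x, hx⟩ = 0 := by rw [← hP ⟨x, hx⟩]; exact h2
    have h5 : (⟨x, hx⟩ : LinearMap.ker (T₀ : E →ₗ[ℂ] E)) = 0 := by
      have := congrArg b.equivFun.symm h4
      rwa [b.equivFun.symm_apply_apply, map_zero] at this
    have : x = 0 := congrArg Subtype.val h5
    simp [this]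
  have hBinj : Function.Injective (Bop z₀) := by
    intro p q h
    have : Bop z₀ (p - q) = 0 := by rw [map_sub, h, sub_self]
    have h0 := hBker _ this
    exact sub_eq_zero.1 h0
  have hBsurj : Function.Surjective (Bop z₀) := by
    rintro ⟨y, w⟩
    set v := c.equivFun (Q y) with hvdef
    have h1 : Q (y - J v) = 0 := by
      rw [map_sub, hQJ]
      have : ∑ i, v i • c i = Q y := by
        rw [hvdef]
        exact c.sum_equivFun (Q y)
      rw [this, sub_self]
    have h2 : y - J v ∈ LinearMap.range (T₀ : E →ₗ[ℂ] E) := by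
      rw [← Submodule.ker_mkQ (LinearMap.range (T₀ : E →ₗ[ℂ] E))]
      exact LinearMap.mem_ker.2 h1
    obtain ⟨x', hx'⟩ := h2
    set k : LinearMap.ker (T₀ : E →ₗ[ℂ] E) := b.equivFun.symm (w - P x') with hkdef
    refine ⟨(x' + k, v), ?_⟩
    rw [hBop]
    have hTk : T₀ (k : E) = 0 := k.2
    have hPk : P (k : E) = w - P x' := by
      rw [hP k, hkdef, b.equivFun.apply_symm_apply]
    refine Prod.ext ?_ ?_
    · show T₀ (x' + k) + J v = y
      rw [map_add, hTk, add_zero, (show T₀ x' = y - J v from hx')]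
      abel
    · show P (x' + k) = w
      rw [map_add, hPk]
      abel
  -- the equivalence at z₀
  set e0 : (E × (Fin m → ℂ)) ≃L[ℂ] (E × (Fin n → ℂ)) :=
    ContinuousLinearEquiv.ofBijective (Bop z₀) (LinearMap.ker_eq_bot.2 hBinj)
      (LinearMap.range_eq_top.2 hBsurj) with he0def
  have he0 : ∀ p, e0 p = Bop z₀ p := fun p => rfl
  set ι : (E × (Fin m → ℂ)) →L[ℂ] (E × (Fin n → ℂ)) :=
    (fst ℂ E (Fin m → ℂ)).prod 0 with hιdef
  have hι : ∀ (x : E) (v : Fin m → ℂ), ι (x, v) = (x, 0) := fun x v => rfl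
  set a : (E × (Fin m → ℂ)) →L[ℂ] (E × (Fin m → ℂ)) :=
    (e0.symm : (E × (Fin n → ℂ)) →L[ℂ] (E × (Fin m → ℂ))).comp ι with hadef
  set C : ℂ → (E × (Fin m → ℂ)) →L[ℂ] (E × (Fin m → ℂ)) :=
    fun z => 1 - (z - z₀) • a with hCdef
  set r : ℝ := (‖a‖ + 1)⁻¹ with hrdef
  have hr : 0 < r := by positivity
  have hCnorm : ∀ z ∈ Metric.ball z₀ r, ‖(z - z₀) • a‖ < 1 := by
    intro z hz
    have hz' : ‖z - z₀‖ < r := by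
      rw [Metric.mem_ball, dist_eq_norm] at hz
      exact hz
    have h0 : ‖(z - z₀) • a‖ ≤ ‖z - z₀‖ * ‖a‖ := ContinuousLinearMap.opNorm_smul_le _ _
    have h1 : ‖z - z₀‖ * ‖a‖ ≤ ‖z - z₀‖ * (‖a‖ + 1) := by
      apply mul_le_mul_of_nonneg_left (by linarith) (norm_nonneg _)
    have h2 : ‖z - z₀‖ * (‖a‖ + 1) < r * (‖a‖ + 1) := by
      apply mul_lt_mul_of_pos_right hz' (by positivity)
    have h3 : r * (‖a‖ + 1) = 1 := by
      rw [hrdef]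
      field_simp
    linarith
  have hCunit : ∀ z ∈ Metric.ball z₀ r, IsUnit (C z) := by
    intro z hz
    exact (Units.oneSub _ (hCnorm z hz)).isUnit
  have hBC : ∀ (z : ℂ) (p : E × (Fin m → ℂ)), Bop z p = e0 (C z p) := by
    rintro z ⟨x, v⟩
    have h1 : C z (x, v) = (x, v) - (z - z₀) • (e0.symm (x, (0 : Fin n → ℂ))) := by
      simp only [hCdef, ContinuousLinearMap.sub_apply, ContinuousLinearMap.one_apply,
        ContinuousLinearMap.smul_apply, hadef, ContinuousLinearMap.comp_apply]
      rw [hι]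
      rfl
    rw [h1, map_sub, map_smul, e0.apply_symm_apply, he0, hBop, hBop]
    have halg : ∀ (w : ℂ) (x : E), (algebraMap ℂ (E →L[ℂ] E) w) x = w • x := by
      intro w x
      rw [Algebra.algebraMap_eq_smul_one]
      rfl
    refine Prod.ext ?_ ?_
    · show (A - algebraMap ℂ (E →L[ℂ] E) z) x + J v
        = (T₀ x + J v) - (z - z₀) • x
      simp only [ContinuousLinearMap.sub_apply, halg, hT₀def]
      rw [sub_smul]
      abel
    · show P x = P x - (z - z₀) • (0 : Fin n → ℂ)
      rw [smul_zero, sub_zero]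
  set Sop : ℂ → (E × (Fin n → ℂ)) →L[ℂ] (E × (Fin m → ℂ)) := fun z =>
    (Ring.inverse (C z)).comp
      (e0.symm : (E × (Fin n → ℂ)) →L[ℂ] (E × (Fin m → ℂ))) with hSopdef
  have hSB : ∀ z ∈ Metric.ball z₀ r, ∀ p, Sop z (Bop z p) = p := by
    intro z hz p
    rw [hBC]
    show (Ring.inverse (C z)) (e0.symm (e0 (C z p))) = p
    rw [e0.symm_apply_apply]
    have : (Ring.inverse (C z) * C z) p = (1 : (E × (Fin m → ℂ)) →L[ℂ] _) p := by
      rw [Ring.inverse_mul_cancel _ (hCunit z hz)]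
    exact this
  have hBS : ∀ z ∈ Metric.ball z₀ r, ∀ q, Bop z (Sop z q) = q := by
    intro z hz q
    rw [hBC]
    show e0 (C z ((Ring.inverse (C z)) (e0.symm q))) = q
    have : (C z * Ring.inverse (C z)) (e0.symm q) = (1 : (E × (Fin m → ℂ)) →L[ℂ] _) (e0.symm q) := by
      rw [Ring.mul_inverse_cancel _ (hCunit z hz)]
    rw [show C z ((Ring.inverse (C z)) (e0.symm q)) = (C z * Ring.inverse (C z)) (e0.symm q) from
      (ContinuousLinearMap.mul_apply _ _ _).symm, this]
    exact e0.apply_symm_apply q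
  -- the finite-dimensional coupling function
  set ρ : (Fin n → ℂ) →L[ℂ] (E × (Fin m → ℂ)) :=
    (e0.symm : (E × (Fin n → ℂ)) →L[ℂ] (E × (Fin m → ℂ))).comp
      (ContinuousLinearMap.inr ℂ E (Fin n → ℂ)) with hρdef
  set Ψ : ((E × (Fin m → ℂ)) →L[ℂ] (E × (Fin m → ℂ))) →L[ℂ] ((Fin n → ℂ) →L[ℂ] (Fin m → ℂ)) :=
    ((compL ℂ (Fin n → ℂ) (E × (Fin m → ℂ)) (Fin m → ℂ)).flip ρ).comp
      (compL ℂ (E × (Fin m → ℂ)) (E × (Fin m → ℂ)) (Fin m → ℂ) (snd ℂ E (Fin m → ℂ))) with hΨdef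
  have hΨ : ∀ (X : (E × (Fin m → ℂ)) →L[ℂ] (E × (Fin m → ℂ))) (v : Fin n → ℂ),
      Ψ X v = (X (e0.symm ((0 : E), v))).2 := fun X v => rfl
  refine ⟨r, n, m, fun z => Ψ (Ring.inverse (C z)), hr, ?_, ?_⟩
  · -- analyticity
    intro z hz
    have h1 : AnalyticAt ℂ C z := by
      apply AnalyticAt.sub analyticAt_const
      exact (analyticAt_id.sub analyticAt_const).smul analyticAt_const
    have h2 : AnalyticAt ℂ (fun w => Ring.inverse (C w)) z := by
      have h3 := analyticAt_inverse (𝕜 := ℂ) (hCunit z hz).unit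
      rw [IsUnit.unit_spec] at h3
      exact h3.comp h1
    exact (Ψ.analyticAt _).comp h2
  · intro z hz
    beta_reduce
    set Tz := A - algebraMap ℂ (E →L[ℂ] E) z with hTzdef
    have hgapp : ∀ v : Fin n → ℂ,
        Ψ (Ring.inverse (C z)) v = (Sop z ((0 : E), v)).2 := fun v => rfl
    have key1 : ∀ x : E, Tz x = 0 →
        Sop z ((0 : E), P x) = (x, (0 : Fin m → ℂ)) := by
      intro x hx
      have hb : Bop z (x, (0 : Fin m → ℂ)) = ((0 : E), P x) := by
        rw [hBop, hx]
        simp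
      rw [← hb, hSB z hz]
    have key2 : ∀ v : Fin n → ℂ, (Sop z ((0 : E), v)).2 = 0 →
        Tz ((Sop z ((0 : E), v)).1) = 0 ∧ P ((Sop z ((0 : E), v)).1) = v := by
      intro v hv
      have hpair : Sop z ((0 : E), v) = ((Sop z ((0 : E), v)).1, (0 : Fin m → ℂ)) := by
        rw [← hv]
      have hb := hBS z hz ((0 : E), v)
      rw [hpair, hBop] at hb
      constructor
      · have h1 := congrArg Prod.fst hb
        simpa [hTzdef] using h1
      · exact congrArg Prod.snd hb
    have keyγT : ∀ x : E, (Sop z (Tz x, (0 : Fin n → ℂ))).2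
        = - (Ψ (Ring.inverse (C z)) (P x)) := by
      intro x
      have hb : Bop z (x, (0 : Fin m → ℂ)) = (Tz x, P x) := by
        rw [hBop, map_zero, add_zero, hTzdef]
      have h1 : (Tz x, (0 : Fin n → ℂ)) = Bop z (x, (0 : Fin m → ℂ)) - ((0 : E), P x) := by
        rw [hb, Prod.mk_sub_mk, sub_zero, sub_self]
      calc (Sop z (Tz x, (0 : Fin n → ℂ))).2
          = (Sop z (Bop z (x, (0 : Fin m → ℂ)) - ((0 : E), P x))).2 := by rw [h1]
        _ = ((x, (0 : Fin m → ℂ)) - Sop z ((0 : E), P x)).2 := by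
            rw [map_sub, hSB z hz]
        _ = - (Sop z ((0 : E), P x)).2 := by
            rw [Prod.snd_sub]; simp
        _ = - Ψ (Ring.inverse (C z)) (P x) := by rw [hgapp]
    have keyγJ : ∀ u : Fin m → ℂ, (Sop z (J u, (0 : Fin n → ℂ))).2 = u := by
      intro u
      have hb : Bop z ((0 : E), u) = (J u, (0 : Fin n → ℂ)) := by
        rw [hBop]; simp
      rw [← hb, hSB z hz]
    have rangechar : ∀ y : E, (∃ x, Tz x = y) ↔
        (∃ v, Ψ (Ring.inverse (C z)) v = (Sop z (y, (0 : Fin n → ℂ))).2) := by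
      intro y
      constructor
      · rintro ⟨x, rfl⟩
        exact ⟨-(P x), by rw [map_neg, keyγT]⟩
      · rintro ⟨v, hv⟩
        set p := Sop z (y, (0 : Fin n → ℂ)) - Sop z ((0 : E), v) with hpdef
        have hp2 : p.2 = 0 := by
          rw [hpdef, Prod.snd_sub, ← hgapp, hv, sub_self]
        have hps : Sop z ((y, (0 : Fin n → ℂ)) - ((0 : E), v)) = p := by
          rw [hpdef, map_sub]
        have hyv : ((y, (0 : Fin n → ℂ)) - ((0 : E), v)) = (y, -v) := by
          rw [Prod.mk_sub_mk, sub_zero, zero_sub]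
        refine ⟨p.1, ?_⟩
        have hb := hBS z hz (y, -v)
        rw [← hyv, hps] at hb
        have hp' : p = (p.1, (0 : Fin m → ℂ)) := by rw [← hp2]
        rw [hp', hBop] at hb
        have h1 := congrArg Prod.fst hb
        simpa [hTzdef] using h1
    -- the kernel equivalence
    have hφmem : ∀ x : E, x ∈ LinearMap.ker (Tz : E →ₗ[ℂ] E) → Ψ (Ring.inverse (C z)) (P x) = 0 := by
      intro x hx
      rw [hgapp, key1 x (LinearMap.mem_ker.1 hx)]
    set φ : LinearMap.ker (Tz : E →ₗ[ℂ] E) →ₗ[ℂ] LinearMap.ker ((Ψ (Ring.inverse (C z))) : (Fin n → ℂ) →ₗ[ℂ] (Fin m → ℂ)) :=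
      LinearMap.codRestrict _ ((P : E →ₗ[ℂ] (Fin n → ℂ)).comp (LinearMap.ker (Tz : E →ₗ[ℂ] E)).subtype)
        (fun x => LinearMap.mem_ker.2 (hφmem x.1 x.2)) with hφdef
    have hφapp : ∀ x : LinearMap.ker (Tz : E →ₗ[ℂ] E), (φ x : Fin n → ℂ) = P x.1 := fun x => rfl
    have hSzero : Sop z ((0 : E), (0 : Fin n → ℂ)) = 0 := by
      have h0 : ((0 : E), (0 : Fin n → ℂ)) = (0 : E × (Fin n → ℂ)) := rfl
      rw [h0, map_zero]
    have hφbij : Function.Bijective φ := by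
      constructor
      · apply (injective_iff_map_eq_zero φ).2
        intro x hx0
        have hPx : P x.1 = 0 := by
          rw [← hφapp x, hx0]; rfl
        have h1 := key1 x.1 (LinearMap.mem_ker.1 x.2)
        rw [hPx, hSzero] at h1
        exact Subtype.ext (congrArg Prod.fst h1).symm
      · rintro ⟨v, hv⟩
        have hv' : (Sop z ((0 : E), v)).2 = 0 := by
          rw [← hgapp]
          exact LinearMap.mem_ker.1 hv
        obtain ⟨h1, h2⟩ := key2 v hv'
        exact ⟨⟨_, LinearMap.mem_ker.2 h1⟩, Subtype.ext h2⟩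
    have eker := LinearEquiv.ofBijective φ hφbij
    -- the range is closed
    set γc : E →L[ℂ] (Fin m → ℂ) :=
      (snd ℂ E (Fin m → ℂ)).comp ((Sop z).comp (inl ℂ E (Fin n → ℂ))) with hγdef
    have hγ : ∀ y : E, γc y = (Sop z (y, (0 : Fin n → ℂ))).2 := fun y => rfl
    have hrangeeq : LinearMap.range (Tz : E →ₗ[ℂ] E) =
        Submodule.comap (γc : E →ₗ[ℂ] (Fin m → ℂ))
          (LinearMap.range ((Ψ (Ring.inverse (C z))) : (Fin n → ℂ) →ₗ[ℂ] (Fin m → ℂ))) := by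
      ext y
      rw [Submodule.mem_comap]
      constructor
      · rintro ⟨x, hx⟩
        obtain ⟨v, hv⟩ := (rangechar y).1 ⟨x, hx⟩
        exact ⟨v, by exact hv.trans (hγ y).symm⟩
      · rintro ⟨v, hv⟩
        refine (rangechar y).2 ⟨v, ?_⟩
        rw [← hγ]
        exact hv
    have hclosed : IsClosed (LinearMap.range (Tz : E →ₗ[ℂ] E) : Set E) := by
      have h1 : IsClosed ((LinearMap.range ((Ψ (Ring.inverse (C z))) : (Fin n → ℂ) →ₗ[ℂ] (Fin m → ℂ))) : Set (Fin m → ℂ)) :=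
        Submodule.closed_of_finiteDimensional _
      have h2 : (LinearMap.range (Tz : E →ₗ[ℂ] E) : Set E) =
          γc ⁻¹' (LinearMap.range ((Ψ (Ring.inverse (C z))) : (Fin n → ℂ) →ₗ[ℂ] (Fin m → ℂ))) := by
        rw [hrangeeq]; rfl
      rw [h2]
      exact h1.preimage γc.continuous
    -- the cokernel equivalence
    set γ' : E →ₗ[ℂ] ((Fin m → ℂ) ⧸ LinearMap.range ((Ψ (Ring.inverse (C z))) : (Fin n → ℂ) →ₗ[ℂ] (Fin m → ℂ))) :=
      (Submodule.mkQ _).comp (γc : E →ₗ[ℂ] (Fin m → ℂ)) with hγ'def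
    have hγ'app : ∀ y : E, γ' y = Submodule.Quotient.mk (γc y) := fun y => rfl
    have hle : LinearMap.range (Tz : E →ₗ[ℂ] E) ≤ LinearMap.ker γ' := by
      intro y hy
      rw [hrangeeq] at hy
      rw [LinearMap.mem_ker, hγ'app]
      exact (Submodule.Quotient.mk_eq_zero _).2 (Submodule.mem_comap.1 hy)
    set lift := Submodule.liftQ (LinearMap.range (Tz : E →ₗ[ℂ] E)) γ' hle with hliftdef
    have hliftsurj : Function.Surjective lift := by
      intro q
      obtain ⟨u, rfl⟩ := Submodule.mkQ_surjective _ q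
      refine ⟨Submodule.Quotient.mk (J u), ?_⟩
      rw [Submodule.liftQ_apply, hγ'app]
      have h1 : γc (J u) = u := by rw [hγ]; exact keyγJ u
      rw [h1, Submodule.mkQ_apply]
    have hliftinj : Function.Injective lift := by
      rw [← LinearMap.ker_eq_bot]
      apply Submodule.ker_liftQ_eq_bot
      intro y hy
      rw [LinearMap.mem_ker, hγ'app] at hy
      have h1 : γc y ∈ LinearMap.range ((Ψ (Ring.inverse (C z))) : (Fin n → ℂ) →ₗ[ℂ] (Fin m → ℂ)) :=
        (Submodule.Quotient.mk_eq_zero _).1 hy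
      rw [hrangeeq]
      exact Submodule.mem_comap.2 h1
    have ecok := LinearEquiv.ofBijective lift ⟨hliftinj, hliftsurj⟩
    -- finiteness
    have hfk : FiniteDimensional ℂ (LinearMap.ker (Tz : E →ₗ[ℂ] E)) := Module.Finite.equiv eker.symm
    have hfc : FiniteDimensional ℂ (E ⧸ LinearMap.range (Tz : E →ₗ[ℂ] E)) := Module.Finite.equiv ecok.symm
    refine ⟨⟨hclosed, hfk, hfc⟩, ?_, ?_⟩
    · -- index computation
      have e1 : finrank ℂ (LinearMap.range ((Ψ (Ring.inverse (C z))) : (Fin n → ℂ) →ₗ[ℂ] (Fin m → ℂ)))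
          + finrank ℂ (LinearMap.ker ((Ψ (Ring.inverse (C z))) : (Fin n → ℂ) →ₗ[ℂ] (Fin m → ℂ))) = n := by
        have h := LinearMap.finrank_range_add_finrank_ker
          ((Ψ (Ring.inverse (C z))) : (Fin n → ℂ) →ₗ[ℂ] (Fin m → ℂ))
        rwa [Module.finrank_pi, Fintype.card_fin] at h
      have e2 : finrank ℂ ((Fin m → ℂ) ⧸ LinearMap.range ((Ψ (Ring.inverse (C z))) : (Fin n → ℂ) →ₗ[ℂ] (Fin m → ℂ)))
          + finrank ℂ (LinearMap.range ((Ψ (Ring.inverse (C z))) : (Fin n → ℂ) →ₗ[ℂ] (Fin m → ℂ))) = m := by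
        have h := Submodule.finrank_quotient_add_finrank
          (LinearMap.range ((Ψ (Ring.inverse (C z))) : (Fin n → ℂ) →ₗ[ℂ] (Fin m → ℂ)))
        rwa [Module.finrank_pi, Fintype.card_fin] at h
      have e3 : finrank ℂ (LinearMap.ker (Tz : E →ₗ[ℂ] E))
          = finrank ℂ (LinearMap.ker ((Ψ (Ring.inverse (C z))) : (Fin n → ℂ) →ₗ[ℂ] (Fin m → ℂ))) := eker.finrank_eq
      have e4 : finrank ℂ (E ⧸ LinearMap.range (Tz : E →ₗ[ℂ] E))
          = finrank ℂ ((Fin m → ℂ) ⧸ LinearMap.range ((Ψ (Ring.inverse (C z))) : (Fin n → ℂ) →ₗ[ℂ] (Fin m → ℂ))) :=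
        ecok.finrank_eq
      unfold fredIndex
      rw [e3, e4]
      omega
    · -- bijectivity transfer
      constructor
      · intro hTbij
        constructor
        · apply (injective_iff_map_eq_zero (Ψ (Ring.inverse (C z)))).2
          intro v hv
          have hv' : (Sop z ((0 : E), v)).2 = 0 := by rw [← hgapp]; exact hv
          obtain ⟨h1, h2⟩ := key2 v hv'
          have h3 : (Sop z ((0 : E), v)).1 = 0 :=
            (injective_iff_map_eq_zero Tz).1 hTbij.1 _ h1
          rw [← h2, h3, map_zero]
        · intro u
          obtain ⟨x, hx⟩ := hTbij.2 (J u)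
          have h2 := keyγT x
          rw [hx, keyγJ] at h2
          exact ⟨-(P x), by rw [map_neg, ← h2]⟩
      · intro hgbij
        constructor
        · apply (injective_iff_map_eq_zero Tz).2
          intro x hx
          have h1 := key1 x hx
          have h2 : Ψ (Ring.inverse (C z)) (P x) = 0 := by
            rw [hgapp, h1]
          have h3 : P x = 0 :=
            (injective_iff_map_eq_zero (Ψ (Ring.inverse (C z)))).1 hgbij.1 _ h2
          rw [h3, hSzero] at h1
          exact (congrArg Prod.fst h1).symm
        · intro y
          obtain ⟨v, hv⟩ := hgbij.2 ((Sop z (y, (0 : Fin n → ℂ))).2)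
          exact (rangechar y).2 ⟨v, hv⟩


end CoupleTest

section DetChar

variable {E : Type*} [NormedAddCommGroup E] [NormedSpace ℂ E] [CompleteSpace E]

open ContinuousLinearMap Metric

private lemma analytic_finset_prod {ι : Type*} (s : Finset ι) (f : ι → ℂ → ℂ) {U : Set ℂ}
    (h : ∀ i ∈ s, AnalyticOnNhd ℂ (f i) U) :
    AnalyticOnNhd ℂ (fun z => ∏ i ∈ s, f i z) U := by
  classical
  induction s using Finset.induction_on with
  | empty => simpa using (analyticOnNhd_const : AnalyticOnNhd ℂ (fun _ => (1:ℂ)) U)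
  | insert a s' hni ih =>
      simp only [Finset.prod_insert hni]
      exact (h a (Finset.mem_insert_self a s')).mul
        (ih fun i hi => h i (Finset.mem_insert_of_mem hi))

private lemma analytic_finset_sum {ι : Type*} (s : Finset ι) (f : ι → ℂ → ℂ) {U : Set ℂ}
    (h : ∀ i ∈ s, AnalyticOnNhd ℂ (f i) U) :
    AnalyticOnNhd ℂ (fun z => ∑ i ∈ s, f i z) U := by
  classical
  induction s using Finset.induction_on with
  | empty => simpa using (analyticOnNhd_const : AnalyticOnNhd ℂ (fun _ => (0:ℂ)) U)
  | insert a s' hni ih =>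
      simp only [Finset.sum_insert hni]
      exact (h a (Finset.mem_insert_self a s')).add
        (ih fun i hi => h i (Finset.mem_insert_of_mem hi))

lemma det_char (A : E →L[ℂ] E) (z₀ : ℂ) (hF : _root_.IsFredholm (A - algebraMap ℂ (E →L[ℂ] E) z₀))
    (hidx : fredIndex (A - algebraMap ℂ (E →L[ℂ] E) z₀) = 0) :
    ∃ r : ℝ, 0 < r ∧ ∃ d : ℂ → ℂ, AnalyticOnNhd ℂ d (Metric.ball z₀ r) ∧
      ∀ z ∈ Metric.ball z₀ r, (z ∈ spectrum ℂ A ↔ d z = 0) := by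
  obtain ⟨r, n, m, g, hr, hganal, hmain⟩ := couple A z₀ hF
  have hz₀ : z₀ ∈ Metric.ball z₀ r := Metric.mem_ball_self hr
  have hnm : n = m := by
    have h1 := (hmain z₀ hz₀).2.1
    rw [hidx] at h1
    omega
  subst hnm
  set d : ℂ → ℂ := fun z => LinearMap.det ((g z) : (Fin n → ℂ) →ₗ[ℂ] (Fin n → ℂ)) with hddef
  have hbij : ∀ z, Function.Bijective (g z) ↔ d z ≠ 0 := by
    intro z
    constructor
    · intro hb hd0
      have hker : LinearMap.ker ((g z) : (Fin n → ℂ) →ₗ[ℂ] (Fin n → ℂ)) = ⊥ :=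
        LinearMap.ker_eq_bot.2 hb.1
      have hunit : IsUnit ((g z) : (Fin n → ℂ) →ₗ[ℂ] (Fin n → ℂ)) :=
        (LinearMap.isUnit_iff_ker_eq_bot _).2 hker
      exact (isUnit_iff_ne_zero.1 (LinearMap.isUnit_det _ hunit)) hd0
    · intro hd0
      have h45 := (LinearMap.hasEigenvalue_zero_tfae
        ((g z) : (Fin n → ℂ) →ₗ[ℂ] (Fin n → ℂ))).out 3 4
      have hker : LinearMap.ker ((g z) : (Fin n → ℂ) →ₗ[ℂ] (Fin n → ℂ)) = ⊥ := by
        by_contra h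
        exact hd0 (h45.2 (bot_lt_iff_ne_bot.2 (Ne.symm (fun hb => h hb.symm))))
      have hinj : Function.Injective ⇑((g z) : (Fin n → ℂ) →ₗ[ℂ] (Fin n → ℂ)) :=
        LinearMap.ker_eq_bot.1 hker
      exact ⟨hinj, LinearMap.injective_iff_surjective.1 hinj⟩
  have hd : ∀ z, d z = Matrix.det (Matrix.of fun i j => g z (Pi.single j 1) i) := by
    intro z
    have h1 : Matrix.of (fun i j => g z (Pi.single j 1) i)
        = LinearMap.toMatrix' ((g z) : (Fin n → ℂ) →ₗ[ℂ] (Fin n → ℂ)) := by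
      ext i j
      rw [LinearMap.toMatrix'_apply]
      have h2 : (fun j' => if j' = j then (1:ℂ) else 0) = Pi.single j 1 := by
        funext j'
        simp [Pi.single_apply]
      rfl
    rw [hddef]
    simp only
    rw [h1, LinearMap.det_toMatrix']
  have hentry : ∀ i j : Fin n, AnalyticOnNhd ℂ (fun z => g z (Pi.single j 1) i)
      (Metric.ball z₀ r) := by
    intro i j z hz
    have h1 : AnalyticAt ℂ g z := hganal z hz
    have h2 := (((ContinuousLinearMap.proj (R := ℂ) (φ := fun _ : Fin n => ℂ) i).comp
      ((ContinuousLinearMap.apply ℂ (Fin n → ℂ) (Pi.single j 1)) :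
        ((Fin n → ℂ) →L[ℂ] (Fin n → ℂ)) →L[ℂ] (Fin n → ℂ))).analyticAt (g z)).comp h1
    exact h2
  have hdanal : AnalyticOnNhd ℂ d (Metric.ball z₀ r) := by
    have h1 : d = fun z => ∑ σ : Equiv.Perm (Fin n),
        ((Equiv.Perm.sign σ : ℤ) : ℂ) * ∏ i, g z (Pi.single i 1) (σ i) := by
      funext z
      rw [hd z, Matrix.det_apply']
      rfl
    rw [h1]
    apply analytic_finset_sum
    intro σ _
    exact analyticOnNhd_const.mul (analytic_finset_prod _ _ fun i _ => hentry (σ i) i)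
  refine ⟨r, hr, d, hdanal, ?_⟩
  intro z hz
  rw [mem_spectrum_iff_not_bijective, (hmain z hz).2.2, hbij z]
  tauto

end DetChar

section Main

variable {E : Type*} [NormedAddCommGroup E] [NormedSpace ℂ E] [CompleteSpace E]

lemma bijective_of_norm_lt (A : E →L[ℂ] E) (z : ℂ) (hz : ‖A‖ < ‖z‖) :
    Function.Bijective (A - algebraMap ℂ (E →L[ℂ] E) z) := by
  have hzpos : (0:ℝ) < ‖z‖ := lt_of_le_of_lt (norm_nonneg A) hz
  have hz0 : z ≠ 0 := by
    intro h
    rw [h, norm_zero] at hzpos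
    exact lt_irrefl _ hzpos
  have hnorm : ‖z⁻¹ • A‖ < 1 := by
    have h1 : ‖z⁻¹ • A‖ ≤ ‖z⁻¹‖ * ‖A‖ := ContinuousLinearMap.opNorm_smul_le _ _
    rw [norm_inv] at h1
    have h2 : ‖z‖⁻¹ * ‖A‖ < 1 := by
      have h3 := mul_lt_mul_of_pos_right hz (inv_pos.2 hzpos)
      rw [mul_inv_cancel₀ (ne_of_gt hzpos)] at h3
      calc ‖z‖⁻¹ * ‖A‖ = ‖A‖ * ‖z‖⁻¹ := mul_comm _ _
        _ < 1 := h3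
    linarith
  have hu1 : IsUnit (1 - z⁻¹ • A) := (Units.oneSub _ hnorm).isUnit
  have heq : algebraMap ℂ (E →L[ℂ] E) z - A = z • (1 - z⁻¹ • A) := by
    rw [smul_sub, smul_smul, mul_inv_cancel₀ hz0, one_smul, Algebra.algebraMap_eq_smul_one]
  have hu2 : IsUnit (algebraMap ℂ (E →L[ℂ] E) z - A) := by
    rw [heq, Algebra.smul_def]
    exact (IsUnit.map (algebraMap ℂ (E →L[ℂ] E)) (isUnit_iff_ne_zero.2 hz0)).mul hu1
  have h := hu2.neg
  rw [neg_sub] at h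
  exact (isUnit_iff_bijective _).1 h

theorem main_theorem (A : E →L[ℂ] E) (hA : essSpectrum A ∩ {z : ℂ | z.re = 0} = ∅)
    (lam : ℂ) (hlam : lam ∈ spectrum ℂ A) (hre : lam.re = 0) :
    (∃ U : Set ℂ, IsOpen U ∧ U ∩ spectrum ℂ A = {lam}) ∧
    (∃ v : E, v ≠ 0 ∧ A v = lam • v) ∧
    IsFredholm (A - algebraMap ℂ (E →L[ℂ] E) lam) ∧
    fredIndex (A - algebraMap ℂ (E →L[ℂ] E) lam) = 0 := by
  have hax : ∀ t : ℝ, IsFredholm (A - algebraMap ℂ (E →L[ℂ] E) ((t : ℂ) * Complex.I)) := by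
    intro t
    by_contra h
    have hmem : ((t:ℂ) * Complex.I) ∈ essSpectrum A ∩ {z : ℂ | z.re = 0} :=
      ⟨h, by simp [Complex.mul_re]⟩
    rw [hA] at hmem
    exact hmem
  have hlamIm : lam = (lam.im : ℂ) * Complex.I := by
    apply Complex.ext
    · simp [hre, Complex.mul_re]
    · simp [Complex.mul_im]
  have hcontI : Continuous fun s : ℝ => (s : ℂ) * Complex.I :=
    Complex.continuous_ofReal.mul continuous_const
  -- the index is locally constant along the imaginary axis and vanishes at infinity
  set h : ℝ → ℤ := fun t =>
    fredIndex (A - algebraMap ℂ (E →L[ℂ] E) ((t : ℂ) * Complex.I)) with hhdef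
  have hlc : IsLocallyConstant h := by
    rw [IsLocallyConstant.iff_eventually_eq]
    intro t
    obtain ⟨r, n, m, g, hr, _, hmain⟩ := couple A ((t:ℂ) * Complex.I) (hax t)
    have hev : ∀ᶠ s : ℝ in nhds t,
        ((s:ℂ) * Complex.I) ∈ Metric.ball ((t:ℂ) * Complex.I) r :=
      hcontI.continuousAt.eventually_mem (Metric.ball_mem_nhds _ hr)
    filter_upwards [hev] with s hs
    rw [hhdef]
    simp only
    rw [(hmain _ hs).2.1, (hmain _ (Metric.mem_ball_self hr)).2.1]
  have hfarnorm : ‖((‖A‖ + 1 : ℝ) : ℂ) * Complex.I‖ = ‖A‖ + 1 := by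
    rw [norm_mul, Complex.norm_I, mul_one, Complex.norm_real]
    exact abs_of_nonneg (by positivity)
  have hfarbij : Function.Bijective
      (A - algebraMap ℂ (E →L[ℂ] E) (((‖A‖ + 1 : ℝ) : ℂ) * Complex.I)) := by
    apply bijective_of_norm_lt
    rw [hfarnorm]
    linarith
  have hfarnotmem : (((‖A‖ + 1 : ℝ) : ℂ) * Complex.I) ∉ spectrum ℂ A := by
    intro hmem
    exact (mem_spectrum_iff_not_bijective A _).1 hmem hfarbij
  have hfar : h (‖A‖ + 1) = 0 := by
    rw [hhdef]
    simp only
    exact (fredholm_of_bijective hfarbij).2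
  have hconst : ∀ t : ℝ, h t = 0 := by
    intro t
    have := congrFun (hlc.eq_const (‖A‖ + 1)) t
    rw [this, Function.const_apply, hfar]
  have hidx0 : fredIndex (A - algebraMap ℂ (E →L[ℂ] E) lam) = 0 := by
    rw [hlamIm]
    have := hconst lam.im
    rw [hhdef] at this
    simpa using this
  have hfred : IsFredholm (A - algebraMap ℂ (E →L[ℂ] E) lam) := by
    rw [hlamIm]
    exact hax lam.im
  -- eigenvector
  have heig : ∃ v : E, v ≠ 0 ∧ A v = lam • v := by
    by_contra hno
    push_neg at hno
    have hker : LinearMap.ker ((A - algebraMap ℂ (E →L[ℂ] E) lam : E →L[ℂ] E) : E →ₗ[ℂ] E) = ⊥ := by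
      apply (Submodule.eq_bot_iff _).2
      intro v hv
      have hv' : A v - lam • v = 0 := by
        have h1 := LinearMap.mem_ker.1 hv
        rwa [ContinuousLinearMap.coe_coe, ContinuousLinearMap.sub_apply, algMap_apply] at h1
      by_contra hv0
      exact hno v hv0 (sub_eq_zero.1 hv')
    have h1 : finrank ℂ (LinearMap.ker ((A - algebraMap ℂ (E →L[ℂ] E) lam : E →L[ℂ] E) : E →ₗ[ℂ] E)) = 0 := by
      rw [hker]
      simp
    have h2 : finrank ℂ (E ⧸ LinearMap.range ((A - algebraMap ℂ (E →L[ℂ] E) lam : E →L[ℂ] E) : E →ₗ[ℂ] E)) = 0 := by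
      unfold fredIndex at hidx0
      omega
    haveI hfd := hfred.2.2
    have hsub : Subsingleton (E ⧸ LinearMap.range ((A - algebraMap ℂ (E →L[ℂ] E) lam : E →L[ℂ] E) : E →ₗ[ℂ] E)) :=
      Module.finrank_zero_iff.1 h2
    have hrange : LinearMap.range ((A - algebraMap ℂ (E →L[ℂ] E) lam : E →L[ℂ] E) : E →ₗ[ℂ] E) = ⊤ :=
      Submodule.Quotient.subsingleton_iff.1 hsub
    have hbij : Function.Bijective (A - algebraMap ℂ (E →L[ℂ] E) lam) :=
      ⟨LinearMap.ker_eq_bot.1 hker, LinearMap.range_eq_top.1 hrange⟩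
    exact (mem_spectrum_iff_not_bijective A lam).1 hlam hbij
  -- `lam` is not in the interior of the spectrum
  have hnotint : lam ∉ interior (spectrum ℂ A) := by
    intro hint
    set W : Set ℝ := {t : ℝ | ((t:ℂ) * Complex.I) ∈ interior (spectrum ℂ A)} with hWdef
    have hWopen : IsOpen W := isOpen_interior.preimage hcontI
    have hWclosed : IsClosed W := by
      apply isClosed_of_closure_subset
      intro t ht
      have hidxt : fredIndex (A - algebraMap ℂ (E →L[ℂ] E) ((t:ℂ) * Complex.I)) = 0 := by
        have := hconst t
        rw [hhdef] at this
        simpa using this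
      obtain ⟨r, hr, d, hdanal, hdchar⟩ := det_char A _ (hax t) hidxt
      have hcl : ((t:ℂ) * Complex.I) ∈ closure (interior (spectrum ℂ A)) := by
        have h1 := image_closure_subset_closure_image (s := W) (f := fun s : ℝ => (s:ℂ) * Complex.I) hcontI
        have h2 : ((t:ℂ) * Complex.I) ∈ closure ((fun s : ℝ => (s:ℂ) * Complex.I) '' W) :=
          h1 ⟨t, ht, rfl⟩
        apply closure_mono _ h2
        rintro w ⟨s, hs, rfl⟩
        exact hs
      obtain ⟨w, hw1, hw2⟩ := mem_closure_iff_nhds.1 hcl _ (Metric.ball_mem_nhds _ hr)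
      have hev : ∀ᶠ u in nhds w, d u = 0 := by
        have hU : (interior (spectrum ℂ A) ∩ Metric.ball ((t:ℂ) * Complex.I) r) ∈ nhds w :=
          Filter.inter_mem (isOpen_interior.mem_nhds hw2) (Metric.isOpen_ball.mem_nhds hw1)
        filter_upwards [hU] with u hu
        exact (hdchar u hu.2).1 (interior_subset hu.1)
      have hfeq : d =ᶠ[nhds w] 0 := hev
      have hEq := hdanal.eqOn_zero_of_preconnected_of_eventuallyEq_zero
        (convex_ball ((t:ℂ) * Complex.I) r).isPreconnected hw1 hfeq
      have hsubset : Metric.ball ((t:ℂ) * Complex.I) r ⊆ spectrum ℂ A := fun u hu =>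
        (hdchar u hu).2 (hEq hu)
      exact mem_interior.2 ⟨Metric.ball ((t:ℂ) * Complex.I) r, hsubset,
        Metric.isOpen_ball, Metric.mem_ball_self hr⟩
    have hWne : W.Nonempty := by
      refine ⟨lam.im, ?_⟩
      show ((lam.im : ℂ) * Complex.I) ∈ interior (spectrum ℂ A)
      rw [← hlamIm]
      exact hint
    have huniv : W = Set.univ := IsClopen.eq_univ ⟨hWclosed, hWopen⟩ hWne
    have hmem : ((‖A‖ + 1 : ℝ) : ℂ) * Complex.I ∈ interior (spectrum ℂ A) := by
      have : (‖A‖ + 1 : ℝ) ∈ W := by rw [huniv]; trivial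
      exact this
    exact hfarnotmem (interior_subset hmem)
  -- isolation via the isolated-zeros dichotomy
  obtain ⟨r, hr, d, hdanal, hdchar⟩ := det_char A lam hfred hidx0
  have hdat : AnalyticAt ℂ d lam := hdanal lam (Metric.mem_ball_self hr)
  rcases hdat.eventually_eq_zero_or_eventually_ne_zero with hcase | hcase
  · exfalso
    apply hnotint
    obtain ⟨ε, hε, hzero⟩ := Metric.eventually_nhds_iff.1 hcase
    apply mem_interior.2
    refine ⟨Metric.ball lam (min ε r), fun u hu => ?_, Metric.isOpen_ball,
      Metric.mem_ball_self (lt_min hε hr)⟩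
    rw [Metric.mem_ball] at hu
    have hu2 : u ∈ Metric.ball lam r := Metric.mem_ball.2 (lt_of_lt_of_le hu (min_le_right _ _))
    exact (hdchar u hu2).2 (hzero (lt_of_lt_of_le hu (min_le_left _ _)))
  · rw [eventually_nhdsWithin_iff] at hcase
    obtain ⟨ε, hε, hne⟩ := Metric.eventually_nhds_iff.1 hcase
    refine ⟨⟨Metric.ball lam (min ε r), Metric.isOpen_ball, ?_⟩, heig, hfred, hidx0⟩
    ext u
    constructor
    · rintro ⟨hu1, hu2⟩
      rw [Metric.mem_ball] at hu1
      rw [Set.mem_singleton_iff]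
      by_contra hne'
      have h1 : d u ≠ 0 := hne (lt_of_lt_of_le hu1 (min_le_left _ _)) hne'
      have hu3 : u ∈ Metric.ball lam r := Metric.mem_ball.2 (lt_of_lt_of_le hu1 (min_le_right _ _))
      exact h1 ((hdchar u hu3).1 hu2)
    · intro hu
      rw [Set.mem_singleton_iff] at hu
      subst hu
      exact ⟨Metric.mem_ball_self (lt_min hε hr), hlam⟩

end Main

/-- If `A` is essentially hyperbolic and `λ` is a point of the spectrum on the imaginary
axis, then `λ` is an isolated eigenvalue and `A - λ` is Fredholm of index zero. -/
theorem isolated_eigenvalue_of_essHyperbolic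
    {E : Type*} [NormedAddCommGroup E] [NormedSpace ℂ E] [CompleteSpace E]
    (A : E →L[ℂ] E) (hA : essSpectrum A ∩ {z : ℂ | z.re = 0} = ∅)
    (lam : ℂ) (hlam : lam ∈ spectrum ℂ A) (hre : lam.re = 0) :
    (∃ U : Set ℂ, IsOpen U ∧ U ∩ spectrum ℂ A = {lam}) ∧
    (∃ v : E, v ≠ 0 ∧ A v = lam • v) ∧
    IsFredholm (A - algebraMap ℂ (E →L[ℂ] E) lam) ∧
    fredIndex (A - algebraMap ℂ (E →L[ℂ] E) lam) = 0 := by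
  exact main_theorem A hA lam hlam hre
end

section
/- Let A be a unital Banach algebra and p, q idempotents with ‖p - q‖ < 1. Then there exists an invertible element u in the connected component of the identity of the group of units of A such that u p = q u. -/
/-- If `p` and `q` are idempotents of a unital Banach algebra with `‖p - q‖ < 1`, then
there is an invertible element `u`, lying in the connected component of the identity of
the group of units, with `u p = q u`. -/
theorem exists_unit_conjugating_idempotents
    {A : Type*} [NormedRing A] [NormedAlgebra ℂ A] [CompleteSpace A]
    (p q : A) (hp : p * p = p) (hq : q * q = q) (hpq : ‖p - q‖ < 1) :
    ∃ u : Aˣ, u ∈ connectedComponent (1 : Aˣ) ∧ (u : A) * p = q * (u : A) := by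
  set d : A := p - q with hd
  set x : A := (2 * q - 1) * d with hx
  set y : A := (2 * p - 1) * d with hy
  have hp' : ∀ z : A, p * (p * z) = p * z := fun z => by rw [← mul_assoc, hp]
  have hq' : ∀ z : A, q * (q * z) = q * z := fun z => by rw [← mul_assoc, hq]
  have hpull : ∀ z w : A, z * (2 * w) = 2 * (z * w) := fun z w => by
    rw [← mul_assoc, show z * 2 = 2 * z by rw [mul_two, two_mul], mul_assoc]
  have hxy : x * y = -(d * d) := by
    simp only [hx, hy, hd, mul_sub, sub_mul, mul_add, add_mul, mul_one, one_mul,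
      mul_assoc, hpull, hp, hq, hp', hq']
    noncomm_ring
  have hyx : y * x = -(d * d) := by
    simp only [hx, hy, hd, mul_sub, sub_mul, mul_add, add_mul, mul_one, one_mul,
      mul_assoc, hpull, hp, hq, hp', hq']
    noncomm_ring
  have hxmy : x = y - d * d - d * d := by
    simp only [hx, hy, hd]; noncomm_ring
  have key1 : ∀ t : ℝ, (1 + t • x) * (1 - t • y) = 1 - (2 * t - t * t) • (d * d) := by
    intro t
    rw [add_mul, one_mul, mul_sub, mul_one, smul_mul_smul_comm, hxy, hxmy]
    module
  have key2 : ∀ t : ℝ, (1 - t • y) * (1 + t • x) = 1 - (2 * t - t * t) • (d * d) := by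
    intro t
    rw [sub_mul, one_mul, mul_add, mul_one, smul_mul_smul_comm, hyx, hxmy]
    module
  have hnorm : ∀ t : Set.Icc (0:ℝ) 1, ‖(2 * (t:ℝ) - t * t) • (d * d)‖ < 1 := by
    rintro ⟨t, ht0, ht1⟩
    have hdd : ‖d * d‖ < 1 := by
      calc ‖d * d‖ ≤ ‖d‖ * ‖d‖ := norm_mul_le d d
        _ < 1 := by nlinarith [norm_nonneg d]
    rw [norm_smul, Real.norm_eq_abs]
    have hc0 : (0:ℝ) ≤ 2 * t - t * t := by nlinarith
    have hc1 : 2 * t - t * t ≤ 1 := by nlinarith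
    rw [abs_of_nonneg hc0]
    calc (2 * t - t * t) * ‖d * d‖ ≤ 1 * ‖d * d‖ :=
          mul_le_mul_of_nonneg_right hc1 (norm_nonneg _)
      _ < 1 := by rwa [one_mul]
  have hU : ∀ t : Set.Icc (0:ℝ) 1, IsUnit (1 + (t:ℝ) • x) := by
    intro t
    set W : Aˣ := Units.oneSub ((2 * (t:ℝ) - t * t) • (d * d)) (hnorm t) with hW
    have hWval : (W : A) = 1 - (2 * (t:ℝ) - t * t) • (d * d) := rfl
    have h1 : (1 + (t:ℝ) • x) * ((1 - (t:ℝ) • y) * ↑W⁻¹) = 1 := by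
      rw [← mul_assoc, key1, ← hWval, Units.mul_inv]
    have h2 : (↑W⁻¹ * (1 - (t:ℝ) • y)) * (1 + (t:ℝ) • x) = 1 := by
      rw [mul_assoc, key2, ← hWval, Units.inv_mul]
    have heq : (1 - (t:ℝ) • y) * ↑W⁻¹ = ↑W⁻¹ * (1 - (t:ℝ) • y) := by
      calc (1 - (t:ℝ) • y) * ↑W⁻¹
          = 1 * ((1 - (t:ℝ) • y) * ↑W⁻¹) := by rw [one_mul]
        _ = ((↑W⁻¹ * (1 - (t:ℝ) • y)) * (1 + (t:ℝ) • x)) * ((1 - (t:ℝ) • y) * ↑W⁻¹) := by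
            rw [h2]
        _ = (↑W⁻¹ * (1 - (t:ℝ) • y)) * ((1 + (t:ℝ) • x) * ((1 - (t:ℝ) • y) * ↑W⁻¹)) := by
            rw [mul_assoc]
        _ = ↑W⁻¹ * (1 - (t:ℝ) • y) := by rw [h1, mul_one]
    exact isUnit_iff_exists.mpr ⟨(1 - (t:ℝ) • y) * ↑W⁻¹, h1, by rw [heq]; exact h2⟩
  set φ : Set.Icc (0:ℝ) 1 → Aˣ := fun t => (hU t).unit with hφ
  have hval : ∀ t, ((φ t : Aˣ) : A) = 1 + (t:ℝ) • x := fun t => (hU t).unit_spec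
  have hcont : Continuous φ := by
    rw [Units.isOpenEmbedding_val.toIsEmbedding.toIsInducing.continuous_iff]
    have : (Units.val ∘ φ) = fun t : Set.Icc (0:ℝ) 1 => 1 + (t:ℝ) • x := by
      funext t; exact hval t
    rw [this]
    exact continuous_const.add ((continuous_subtype_val : Continuous
      (fun t : Set.Icc (0:ℝ) 1 => (t:ℝ))).smul continuous_const)
  have hpre : IsPreconnected (Set.range φ) := by
    haveI : PreconnectedSpace (Set.Icc (0:ℝ) 1) :=
      Subtype.preconnectedSpace isPreconnected_Icc
    exact isPreconnected_range hcont
  have h1mem : (1 : Aˣ) ∈ Set.range φ := by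
    refine ⟨⟨0, by norm_num⟩, ?_⟩
    apply Units.ext
    rw [hval]
    norm_num
  have hsub := hpre.subset_connectedComponent h1mem
  refine ⟨φ ⟨1, by norm_num⟩, hsub ⟨_, rfl⟩, ?_⟩
  rw [hval]
  simp only [Set.Icc.coe_one, one_smul]
  simp only [hx, hd, mul_sub, sub_mul, mul_add, add_mul, mul_one, one_mul,
    mul_assoc, hpull, hp, hq, hp', hq']
  noncomm_ring
end

section
/- The space of idempotents of a unital Banach algebra is locally path-connected: any two idempotents at distance less than 1 are joined by a continuous path of idempotents. -/
/-- If `a * b = c` and `b * a = c` with `c` a unit, then `a` is a unit. -/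
lemma isUnit_of_mul_eq_unit {A : Type*} [Ring A] {a b c : A}
    (hab : a * b = c) (hba : b * a = c) (hc : IsUnit c) : IsUnit a := by
  obtain ⟨v, rfl⟩ := hc
  have hval : a * (b * ↑v⁻¹) = 1 := by rw [← mul_assoc, hab]; exact v.mul_inv
  have hcomm : (↑v⁻¹ : A) * b = b * ↑v⁻¹ := by
    calc (↑v⁻¹ : A) * b = ↑v⁻¹ * b * (a * (b * ↑v⁻¹)) := by rw [hval, mul_one]
    _ = ↑v⁻¹ * (b * a) * (b * ↑v⁻¹) := by noncomm_ring
    _ = b * ↑v⁻¹ := by rw [hba, v.inv_mul, one_mul]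
  exact ⟨⟨a, b * ↑v⁻¹, hval, by rw [← hcomm, mul_assoc, hba, v.inv_mul]⟩, rfl⟩

/-- Two idempotents of a unital Banach algebra at distance less than `1` are joined by a
continuous path of idempotents. -/
theorem joinedIn_idempotents_of_dist_lt_one
    {A : Type*} [NormedRing A] [NormedAlgebra ℂ A] [CompleteSpace A]
    (p q : A) (hp : p * p = p) (hq : q * q = q) (hpq : ‖p - q‖ < 1) :
    JoinedIn {r : A | r * r = r} p q := by
  set m : A := q * p + q * p - p - q with hm_def
  set n : A := p * q + p * q - p - q with hn_def
  set d : A := p + q - p * q - q * p with hd_def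
  have redp : ∀ x : A, p * (p * x) = p * x := fun x => by rw [← mul_assoc, hp]
  have redq : ∀ x : A, q * (q * x) = q * x := fun x => by rw [← mul_assoc, hq]
  have hmn : m * n = d := by
    simp only [hm_def, hn_def, hd_def, sub_mul, mul_sub, add_mul, mul_add, mul_assoc,
      hp, hq, redp, redq]
    abel
  have hnm : n * m = d := by
    simp only [hm_def, hn_def, hd_def, sub_mul, mul_sub, add_mul, mul_add, mul_assoc,
      hp, hq, redp, redq]
    abel
  have hsum : m + n = -(d + d) := by
    simp only [hm_def, hn_def, hd_def]; abel
  have hmp : (1 + m) * p = q * (1 + m) := by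
    simp only [hm_def, add_mul, mul_add, sub_mul, mul_sub, one_mul, mul_one, mul_assoc,
      hp, hq, redp, redq]
    abel
  have hd_sq : d = (p - q) * (p - q) := by
    simp only [hd_def, sub_mul, mul_sub, hp, hq]; abel
  have hdnorm : ‖d‖ < 1 := by
    rw [hd_sq]
    calc ‖(p - q) * (p - q)‖ ≤ ‖p - q‖ * ‖p - q‖ := norm_mul_le _ _
      _ < 1 := by nlinarith [norm_nonneg (p - q)]
  have expand : ∀ (c : ℂ) (x y : A),
      (1 + c • x) * (1 + c • y) = 1 + c • (x + y) + (c * c) • (x * y) := by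
    intro c x y
    simp only [add_mul, mul_add, one_mul, mul_one, smul_mul_assoc, mul_smul_comm,
      smul_smul, smul_add]
    abel
  have hprod : ∀ c : ℂ, (1 + c • m) * (1 + c • n) = 1 - (c + c - c * c) • d := by
    intro c; rw [expand, hmn, hsum]; module
  have hprod' : ∀ c : ℂ, (1 + c • n) * (1 + c • m) = 1 - (c + c - c * c) • d := by
    intro c; rw [expand, hnm, add_comm n m, hsum]; module
  have hUe : ∀ t ∈ Set.Icc (0 : ℝ) 1, IsUnit (1 + ((t : ℂ)) • m) := by
    intro t ht
    obtain ⟨ht0, ht1⟩ := ht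
    have hcoef : ((t : ℂ) + (t : ℂ) - (t : ℂ) * (t : ℂ)) = ((t + t - t * t : ℝ) : ℂ) := by
      push_cast; ring
    have hnormlt : ‖((t : ℂ) + (t : ℂ) - (t : ℂ) * (t : ℂ)) • d‖ < 1 := by
      rw [hcoef, norm_smul, Complex.norm_real, Real.norm_eq_abs]
      have habs : |t + t - t * t| ≤ 1 := by
        rw [abs_le]; constructor <;> nlinarith
      nlinarith [norm_nonneg d, abs_nonneg (t + t - t * t)]
    exact isUnit_of_mul_eq_unit (hprod (t : ℂ)) (hprod' (t : ℂ))
      (Units.oneSub _ hnormlt).isUnit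
  set F : ℝ → A := fun t =>
    (1 + ((t : ℂ)) • m) * p * Ring.inverse (1 + ((t : ℂ)) • m) with hF_def
  have he_cont : Continuous fun t : ℝ => 1 + ((t : ℂ)) • m :=
    continuous_const.add (Complex.continuous_ofReal.smul continuous_const)
  have hFc : ContinuousOn F (Set.Icc (0 : ℝ) 1) := by
    intro t ht
    have h1 : ContinuousAt (Ring.inverse ∘ fun t : ℝ => 1 + ((t : ℂ)) • m) t := by
      have h2 := NormedRing.inverse_continuousAt (hUe t ht).unit
      rw [(hUe t ht).unit_spec] at h2
      exact ContinuousAt.comp (f := fun t : ℝ => 1 + ((t : ℂ)) • m) (x := t) h2 he_cont.continuousAt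
    exact (((he_cont.continuousAt.mul continuousAt_const).mul h1)).continuousWithinAt
  have hidem : ∀ t ∈ Set.Icc (0 : ℝ) 1, F t * F t = F t := by
    intro t ht
    have h := hUe t ht
    set a : A := 1 + ((t : ℂ)) • m
    have key : Ring.inverse a * a = 1 := Ring.inverse_mul_cancel _ h
    have step : (a * p * Ring.inverse a) * (a * p * Ring.inverse a)
        = a * (p * ((Ring.inverse a * a) * (p * Ring.inverse a))) := by
      noncomm_ring
    rw [hF_def]
    simp only
    rw [step, key, one_mul, redp, ← mul_assoc]
  have hF0 : F 0 = p := by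
    simp [hF_def, Ring.inverse_one]
  have hF1 : F 1 = q := by
    have h1 : IsUnit (1 + ((1 : ℝ) : ℂ) • m) := hUe 1 (by constructor <;> norm_num)
    rw [hF_def]
    simp only [Complex.ofReal_one, one_smul] at h1 ⊢
    rw [hmp, mul_assoc, Ring.mul_inverse_cancel _ h1, mul_one]
  exact ⟨{ toFun := fun s => F s.val
           continuous_toFun := hFc.comp_continuous continuous_subtype_val fun s => s.2
           source' := hF0
           target' := hF1 },
    fun s => hidem s.val s.2⟩
end

section
/- Let E be a Banach space and P, Q bounded projectors on E lying in the same connected component of the space of bounded projectors. Then the ranges of P and Q are isomorphic as Banach spaces, and the kernels of P and Q are isomorphic. -/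
section Aux
set_option linter.unusedSectionVars false

variable {E : Type*} [NormedAddCommGroup E] [NormedSpace ℂ E] [CompleteSpace E]

/-- The "conjugate by a unit" relation between operators. -/
def ProjRel (P Q : E →L[ℂ] E) : Prop :=
  ∃ U : (E →L[ℂ] E)ˣ, (U : E →L[ℂ] E) * P = Q * (U : E →L[ℂ] E)

lemma projRel_refl (P : E →L[ℂ] E) : ProjRel P P := ⟨1, by simp⟩

lemma projRel_inv_eq {P Q : E →L[ℂ] E} (U : (E →L[ℂ] E)ˣ)
    (h : (U : E →L[ℂ] E) * P = Q * U) :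
    (U⁻¹ : (E →L[ℂ] E)ˣ).val * Q = P * (U⁻¹ : (E →L[ℂ] E)ˣ).val := by
  calc (U⁻¹ : (E →L[ℂ] E)ˣ).val * Q
      = U⁻¹.val * (Q * U.val) * U⁻¹.val := by
        rw [mul_assoc, mul_assoc, Units.mul_inv, mul_one]
    _ = U⁻¹.val * (U.val * P) * U⁻¹.val := by rw [h]
    _ = P * U⁻¹.val := by rw [← mul_assoc, Units.inv_mul, one_mul]

lemma projRel_symm {P Q : E →L[ℂ] E} (h : ProjRel P Q) : ProjRel Q P := by
  obtain ⟨U, hU⟩ := h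
  exact ⟨U⁻¹, projRel_inv_eq U hU⟩

lemma projRel_trans {P Q R : E →L[ℂ] E} (h1 : ProjRel P Q) (h2 : ProjRel Q R) :
    ProjRel P R := by
  obtain ⟨U, hU⟩ := h1
  obtain ⟨V, hV⟩ := h2
  refine ⟨V * U, ?_⟩
  rw [Units.val_mul, mul_assoc, hU, ← mul_assoc, hV, mul_assoc]

/-- Two projectors at distance `< 1` are conjugate. -/
lemma projRel_of_close {P Q : E →L[ℂ] E} (hP : P * P = P) (hQ : Q * Q = Q)
    (hd : ‖Q - P‖ < 1) : ProjRel P Q := by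
  have hP2 : ∀ X : E →L[ℂ] E, P * (P * X) = P * X := fun X => by rw [← mul_assoc, hP]
  have hQ2 : ∀ X : E →L[ℂ] E, Q * (Q * X) = Q * X := fun X => by rw [← mul_assoc, hQ]
  set u : E →L[ℂ] E := Q * P + (1 - Q) * (1 - P) with hu_def
  set u' : E →L[ℂ] E := P * Q + (1 - P) * (1 - Q) with hu'_def
  have hD : ‖(P - Q) * (P - Q)‖ < 1 := by
    calc ‖(P - Q) * (P - Q)‖ ≤ ‖P - Q‖ * ‖P - Q‖ := norm_mul_le _ _
      _ < 1 := by
          rw [norm_sub_rev] at hd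
          nlinarith [norm_nonneg (P - Q)]
  set W : (E →L[ℂ] E)ˣ := Units.oneSub ((P - Q) * (P - Q)) hD with hW_def
  have hWval : (W : E →L[ℂ] E) = 1 - (P - Q) * (P - Q) := rfl
  have huu' : u * u' = (W : E →L[ℂ] E) := by
    rw [hWval, hu_def, hu'_def]
    simp only [mul_sub, sub_mul, mul_one, one_mul, mul_add, add_mul, mul_assoc, hP, hQ, hP2, hQ2]
    abel
  have hu'u : u' * u = (W : E →L[ℂ] E) := by
    rw [hWval, hu_def, hu'_def]
    simp only [mul_sub, sub_mul, mul_one, one_mul, mul_add, add_mul, mul_assoc, hP, hQ, hP2, hQ2]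
    abel
  have hub : u * (u' * (W⁻¹ : (E →L[ℂ] E)ˣ).val) = 1 := by
    rw [← mul_assoc, huu', Units.mul_inv]
  have hcu : ((W⁻¹ : (E →L[ℂ] E)ˣ).val * u') * u = 1 := by
    rw [mul_assoc, hu'u, Units.inv_mul]
  have hbc : u' * (W⁻¹ : (E →L[ℂ] E)ˣ).val = (W⁻¹ : (E →L[ℂ] E)ˣ).val * u' := by
    calc u' * (W⁻¹ : (E →L[ℂ] E)ˣ).val
        = 1 * (u' * (W⁻¹ : (E →L[ℂ] E)ˣ).val) := (one_mul _).symm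
      _ = (((W⁻¹ : (E →L[ℂ] E)ˣ).val * u') * u) * (u' * (W⁻¹ : (E →L[ℂ] E)ˣ).val) := by
          rw [hcu]
      _ = ((W⁻¹ : (E →L[ℂ] E)ˣ).val * u') * (u * (u' * (W⁻¹ : (E →L[ℂ] E)ˣ).val)) := by
          rw [mul_assoc]
      _ = (W⁻¹ : (E →L[ℂ] E)ˣ).val * u' := by rw [hub, mul_one]
  refine ⟨⟨u, u' * (W⁻¹ : (E →L[ℂ] E)ˣ).val, hub, by rw [hbc]; exact hcu⟩, ?_⟩
  show u * P = Q * u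
  rw [hu_def]
  simp only [mul_sub, sub_mul, mul_one, one_mul, mul_add, add_mul, mul_assoc, hP, hQ, hP2, hQ2]
  abel

/-- A unit mapping `p` into `q` whose inverse maps `q` into `p` gives an isomorphism. -/
lemma iso_of_unit (U : (E →L[ℂ] E)ˣ) (p q : Submodule ℂ E)
    (h1 : ∀ x ∈ p, (U : E →L[ℂ] E) x ∈ q)
    (h2 : ∀ x ∈ q, ((U⁻¹ : (E →L[ℂ] E)ˣ) : E →L[ℂ] E) x ∈ p) :
    Nonempty (p ≃L[ℂ] q) := by
  set f : p →L[ℂ] q :=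
    ContinuousLinearMap.codRestrict ((U : E →L[ℂ] E).comp p.subtypeL) q
      (fun x => h1 x x.2) with hf
  set g : q →L[ℂ] p :=
    ContinuousLinearMap.codRestrict (((U⁻¹ : (E →L[ℂ] E)ˣ) : E →L[ℂ] E).comp q.subtypeL) p
      (fun x => h2 x x.2) with hg
  have hleft : Function.LeftInverse g f := by
    intro x
    ext
    show ((U⁻¹ : (E →L[ℂ] E)ˣ) : E →L[ℂ] E) ((U : E →L[ℂ] E) x) = x
    have := U.inv_mul
    calc ((U⁻¹ : (E →L[ℂ] E)ˣ) : E →L[ℂ] E) ((U : E →L[ℂ] E) x)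
        = (((U⁻¹ : (E →L[ℂ] E)ˣ) : E →L[ℂ] E) * (U : E →L[ℂ] E)) (x : E) := rfl
      _ = (x : E) := by rw [U.inv_mul]; rfl
  have hright : Function.RightInverse g f := by
    intro x
    ext
    show (U : E →L[ℂ] E) (((U⁻¹ : (E →L[ℂ] E)ˣ) : E →L[ℂ] E) x) = x
    calc (U : E →L[ℂ] E) (((U⁻¹ : (E →L[ℂ] E)ˣ) : E →L[ℂ] E) x)
        = ((U : E →L[ℂ] E) * ((U⁻¹ : (E →L[ℂ] E)ˣ) : E →L[ℂ] E)) (x : E) := rfl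
      _ = (x : E) := by rw [U.mul_inv]; rfl
  exact ⟨ContinuousLinearEquiv.equivOfInverse f g hleft hright⟩

end Aux

/-- Two bounded projectors lying in the same connected component of the space of bounded
projectors have isomorphic ranges and isomorphic kernels. -/
theorem range_ker_isomorphic_of_connected_projectors
    {E : Type*} [NormedAddCommGroup E] [NormedSpace ℂ E] [CompleteSpace E]
    (P Q : E →L[ℂ] E) (hP : P * P = P) (hQ : Q * Q = Q)
    (h : Q ∈ connectedComponentIn {T : E →L[ℂ] E | T * T = T} P) :
    Nonempty (↥(LinearMap.range (P : E →ₗ[ℂ] E)) ≃L[ℂ] ↥(LinearMap.range (Q : E →ₗ[ℂ] E))) ∧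
    Nonempty (↥(LinearMap.ker (P : E →ₗ[ℂ] E)) ≃L[ℂ] ↥(LinearMap.ker (Q : E →ₗ[ℂ] E))) := by
  set S : Set (E →L[ℂ] E) := {T : E →L[ℂ] E | T * T = T} with hS
  -- Step 1: ProjRel P Q via connectedness
  have hrel : ProjRel P Q := by
    by_contra hnot
    set U₁ : Set (E →L[ℂ] E) := ⋃ T ∈ {T ∈ S | ProjRel P T}, Metric.ball T 1 with hU₁
    set U₂ : Set (E →L[ℂ] E) := ⋃ T ∈ {T ∈ S | ¬ ProjRel P T}, Metric.ball T 1 with hU₂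
    have hO₁ : IsOpen U₁ := isOpen_biUnion fun _ _ => Metric.isOpen_ball
    have hO₂ : IsOpen U₂ := isOpen_biUnion fun _ _ => Metric.isOpen_ball
    have hA : IsPreconnected (connectedComponentIn S P) := isPreconnected_connectedComponentIn
    have hAS : connectedComponentIn S P ⊆ S := connectedComponentIn_subset S P
    have hcover : connectedComponentIn S P ⊆ U₁ ∪ U₂ := by
      intro T hT
      have hTS : T ∈ S := hAS hT
      by_cases hrT : ProjRel P T
      · exact Or.inl (Set.mem_biUnion ⟨hTS, hrT⟩ (Metric.mem_ball_self one_pos))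
      · exact Or.inr (Set.mem_biUnion ⟨hTS, hrT⟩ (Metric.mem_ball_self one_pos))
    have hP1 : P ∈ connectedComponentIn S P ∩ U₁ :=
      ⟨mem_connectedComponentIn hP,
        Set.mem_biUnion ⟨hP, projRel_refl P⟩ (Metric.mem_ball_self one_pos)⟩
    have hQ2 : Q ∈ connectedComponentIn S P ∩ U₂ :=
      ⟨h, Set.mem_biUnion ⟨hQ, hnot⟩ (Metric.mem_ball_self one_pos)⟩
    obtain ⟨x, hxA, hx1, hx2⟩ :=
      hA U₁ U₂ hO₁ hO₂ hcover ⟨P, hP1⟩ ⟨Q, hQ2⟩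
    have hxS : x ∈ S := hAS hxA
    obtain ⟨T, hT, hxT⟩ := Set.mem_iUnion₂.mp hx1
    obtain ⟨T', hT', hxT'⟩ := Set.mem_iUnion₂.mp hx2
    have hrTx : ProjRel T x := by
      apply projRel_of_close hT.1 hxS
      rw [← dist_eq_norm]
      exact Metric.mem_ball.mp hxT
    have hrT'x : ProjRel T' x := by
      apply projRel_of_close hT'.1 hxS
      rw [← dist_eq_norm]
      exact Metric.mem_ball.mp hxT'
    exact hT'.2 (projRel_trans (projRel_trans hT.2 hrTx) (projRel_symm hrT'x))
  -- Step 2: build the isomorphisms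
  obtain ⟨U, hU⟩ := hrel
  have hUinv := projRel_inv_eq U hU
  constructor
  · apply iso_of_unit U
    · intro x hx
      obtain ⟨y, hy⟩ := LinearMap.mem_range.mp hx
      refine LinearMap.mem_range.mpr ⟨(U : E →L[ℂ] E) y, ?_⟩
      calc Q ((U : E →L[ℂ] E) y) = (Q * (U : E →L[ℂ] E)) y := rfl
        _ = ((U : E →L[ℂ] E) * P) y := by rw [hU]
        _ = (U : E →L[ℂ] E) (P y) := rfl
        _ = (U : E →L[ℂ] E) x := congrArg (U : E →L[ℂ] E) hy
    · intro x hx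
      obtain ⟨y, hy⟩ := LinearMap.mem_range.mp hx
      refine LinearMap.mem_range.mpr ⟨((U⁻¹ : (E →L[ℂ] E)ˣ) : E →L[ℂ] E) y, ?_⟩
      calc P (((U⁻¹ : (E →L[ℂ] E)ˣ) : E →L[ℂ] E) y)
          = (P * ((U⁻¹ : (E →L[ℂ] E)ˣ) : E →L[ℂ] E)) y := rfl
        _ = (((U⁻¹ : (E →L[ℂ] E)ˣ) : E →L[ℂ] E) * Q) y := by rw [hUinv]
        _ = ((U⁻¹ : (E →L[ℂ] E)ˣ) : E →L[ℂ] E) (Q y) := rfl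
        _ = ((U⁻¹ : (E →L[ℂ] E)ˣ) : E →L[ℂ] E) x := congrArg ((U⁻¹ : (E →L[ℂ] E)ˣ) : E →L[ℂ] E) hy
  · apply iso_of_unit U
    · intro x hx
      have hx0 : P x = 0 := LinearMap.mem_ker.mp hx
      refine LinearMap.mem_ker.mpr ?_
      calc Q ((U : E →L[ℂ] E) x) = (Q * (U : E →L[ℂ] E)) x := rfl
        _ = ((U : E →L[ℂ] E) * P) x := by rw [hU]
        _ = (U : E →L[ℂ] E) (P x) := rfl
        _ = 0 := by rw [hx0, map_zero]
    · intro x hx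
      have hx0 : Q x = 0 := LinearMap.mem_ker.mp hx
      refine LinearMap.mem_ker.mpr ?_
      calc P (((U⁻¹ : (E →L[ℂ] E)ˣ) : E →L[ℂ] E) x)
          = (P * ((U⁻¹ : (E →L[ℂ] E)ˣ) : E →L[ℂ] E)) x := rfl
        _ = (((U⁻¹ : (E →L[ℂ] E)ˣ) : E →L[ℂ] E) * Q) x := by rw [hUinv]
        _ = ((U⁻¹ : (E →L[ℂ] E)ˣ) : E →L[ℂ] E) (Q x) := rfl
        _ = 0 := by rw [hx0, map_zero]
end

section
/- Let P, Q, R be bounded projectors on a Banach space E such that P - Q and Q - R are compact. Define the relative dimension [P - Q] as the Fredholm index of Q restricted to range(P), viewed as an operator into range(Q). Then [P - R] = [P - Q] + [Q - R]. -/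
open Module

/-- The restriction of `Q` to an operator `range P → range Q`. -/
noncomputable def projRestrict {E : Type*} [NormedAddCommGroup E] [NormedSpace ℂ E]
    (P Q : E →L[ℂ] E) : ↥(LinearMap.range (P : E →ₗ[ℂ] E)) →L[ℂ] ↥(LinearMap.range (Q : E →ₗ[ℂ] E)) :=
  (Q.comp (LinearMap.range (P : E →ₗ[ℂ] E)).subtypeL).codRestrict (LinearMap.range (Q : E →ₗ[ℂ] E))
    (fun _ => LinearMap.mem_range_self (Q : E →ₗ[ℂ] E) _)

/-- The relative dimension `[P - Q]`: the Fredholm index of the restriction of `Q` to an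
operator `range P → range Q`. -/
noncomputable def relDim {E : Type*} [NormedAddCommGroup E] [NormedSpace ℂ E]
    (P Q : E →L[ℂ] E) : ℤ :=
  fredIndex (projRestrict P Q)



open LinearMap

namespace FredholmAux

variable {K : Type*} [Field K] {U V W : Type*}
  [AddCommGroup U] [Module K U] [AddCommGroup V] [Module K V] [AddCommGroup W] [Module K W]

/-- A module with finite-dimensional submodule and quotient is finite-dimensional. -/
theorem fd_of_submodule_quotient (p : Submodule K V) (h1 : FiniteDimensional K p)
    (h2 : FiniteDimensional K (V ⧸ p)) : FiniteDimensional K V := by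
  rw [FiniteDimensional, Module.finite_def]
  apply Submodule.fg_of_fg_map_of_fg_inf_ker p.mkQ
  · rw [Submodule.map_top, Submodule.range_mkQ, ← Module.finite_def]
    exact h2
  · rw [top_inf_eq, Submodule.ker_mkQ, ← Submodule.fg_top, ← Module.finite_def]
    exact h1

theorem fd_quot_of_le {p q : Submodule K V} (hpq : p ≤ q) (h : FiniteDimensional K (V ⧸ p)) :
    FiniteDimensional K (V ⧸ q) := by
  have e := Submodule.quotientQuotientEquivQuotientSup p q
  rw [sup_eq_right.mpr hpq] at e
  exact FiniteDimensional.of_surjective e.toLinearMap e.surjective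

theorem fd_ker_of_le {f g : Submodule K V} (hpq : f ≤ g) (h : FiniteDimensional K g) :
    FiniteDimensional K f := Submodule.finiteDimensional_of_le hpq

-- kernel of a composition
theorem ker_comp_fd (T : U →ₗ[K] V) (S : V →ₗ[K] W)
    (h1 : FiniteDimensional K (ker T)) (h2 : FiniteDimensional K (ker S)) :
    FiniteDimensional K (ker (S ∘ₗ T)) ∧
    finrank K (ker (S ∘ₗ T)) = finrank K (ker T) + finrank K ↥(ker S ⊓ range T) := by
  set T' : ↥(ker (S ∘ₗ T)) →ₗ[K] V := T.domRestrict (ker (S ∘ₗ T)) with hT'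
  have hker : ker T' = Submodule.comap (ker (S ∘ₗ T)).subtype (ker T) :=
    LinearMap.ker_domRestrict _ _
  have hkerT_le : ker T ≤ ker (S ∘ₗ T) := ker_le_ker_comp T S
  have ekd : ↥(ker T') ≃ₗ[K] ↥(ker T) := by
    rw [hker]; exact Submodule.comapSubtypeEquivOfLe hkerT_le
  have hrange : range T' = ker S ⊓ range T := by
    ext v
    constructor
    · rintro ⟨⟨x, hx⟩, rfl⟩
      refine ⟨?_, ⟨x, rfl⟩⟩
      exact hx
    · rintro ⟨hv1, x, rfl⟩
      exact ⟨⟨x, by simpa [LinearMap.mem_ker] using hv1⟩, rfl⟩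
  have erg : (↥(ker (S ∘ₗ T)) ⧸ ker T') ≃ₗ[K] ↥(ker S ⊓ range T) := by
    rw [← hrange]; exact T'.quotKerEquivRange
  have fdrange : FiniteDimensional K ↥(ker S ⊓ range T) :=
    Submodule.finiteDimensional_of_le inf_le_left
  have fdker' : FiniteDimensional K ↥(ker T') := ekd.symm.finiteDimensional
  have fdq : FiniteDimensional K (↥(ker (S ∘ₗ T)) ⧸ ker T') := erg.symm.finiteDimensional
  have fdtot : FiniteDimensional K ↥(ker (S ∘ₗ T)) := fd_of_submodule_quotient _ fdker' fdq
  refine ⟨fdtot, ?_⟩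
  have h := (ker T').finrank_quotient_add_finrank
  rw [erg.finrank_eq, ekd.finrank_eq] at h
  omega

-- cokernel of a composition
theorem coker_comp_fd (T : U →ₗ[K] V) (S : V →ₗ[K] W)
    (h3 : FiniteDimensional K (V ⧸ range T)) (h4 : FiniteDimensional K (W ⧸ range S)) :
    FiniteDimensional K (W ⧸ range (S ∘ₗ T)) ∧
    finrank K (W ⧸ range (S ∘ₗ T))
      = finrank K (V ⧸ (range T ⊔ ker S)) + finrank K (W ⧸ range S) := by
  set g : V →ₗ[K] (W ⧸ range (S ∘ₗ T)) := (range (S ∘ₗ T)).mkQ ∘ₗ S with hg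
  have hkerg : ker g = range T ⊔ ker S := by
    ext v
    simp only [hg, LinearMap.mem_ker, LinearMap.comp_apply, Submodule.mkQ_apply,
      Submodule.Quotient.mk_eq_zero]
    constructor
    · rintro ⟨u, hu⟩
      have : v - T u ∈ ker S := by
        rw [LinearMap.mem_ker, map_sub, ← LinearMap.comp_apply, hu, sub_self]
      have hv : v = T u + (v - T u) := by abel
      rw [hv]
      exact Submodule.add_mem_sup (LinearMap.mem_range_self T u) this
    · intro hv
      rcases Submodule.mem_sup.mp hv with ⟨a, ⟨u, rfl⟩, b, hb, rfl⟩
      refine ⟨u, ?_⟩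
      rw [map_add, LinearMap.mem_ker.mp hb, add_zero]
      rfl
  have hrangeg : range g = Submodule.map (range (S ∘ₗ T)).mkQ (range S) :=
    LinearMap.range_comp _ _
  have e1 : (V ⧸ (range T ⊔ ker S)) ≃ₗ[K] ↥(range g) := by
    rw [← hkerg]; exact g.quotKerEquivRange
  have e2 : ((W ⧸ range (S ∘ₗ T)) ⧸ Submodule.map (range (S ∘ₗ T)).mkQ (range S))
      ≃ₗ[K] W ⧸ (range (S ∘ₗ T) ⊔ range S) :=
    Submodule.quotientQuotientEquivQuotientSup _ _
  have hsup : range (S ∘ₗ T) ⊔ range S = range S :=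
    sup_eq_right.mpr (LinearMap.range_comp_le_range T S)
  rw [hsup] at e2
  -- finite dimensionality of V ⧸ (range T ⊔ ker S)
  have fdq1 : FiniteDimensional K (V ⧸ (range T ⊔ ker S)) := fd_quot_of_le le_sup_left h3
  have fdrg : FiniteDimensional K ↥(range g) := e1.finiteDimensional
  have fdrg' : FiniteDimensional K ↥(Submodule.map (range (S ∘ₗ T)).mkQ (range S)) := by
    rw [← hrangeg]; exact fdrg
  have fdq2 : FiniteDimensional K
      ((W ⧸ range (S ∘ₗ T)) ⧸ Submodule.map (range (S ∘ₗ T)).mkQ (range S)) :=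
    e2.symm.finiteDimensional
  have fdtot : FiniteDimensional K (W ⧸ range (S ∘ₗ T)) :=
    fd_of_submodule_quotient _ fdrg' fdq2
  refine ⟨fdtot, ?_⟩
  have h := (Submodule.map (range (S ∘ₗ T)).mkQ (range S)).finrank_quotient_add_finrank
  rw [e2.finrank_eq] at h
  have : finrank K ↥(Submodule.map (range (S ∘ₗ T)).mkQ (range S))
      = finrank K (V ⧸ (range T ⊔ ker S)) := by
    rw [← hrangeg, ← e1.finrank_eq]
  omega

end FredholmAux

namespace FredholmAux

variable {K : Type*} [Field K] {U V W : Type*}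
  [AddCommGroup U] [Module K U] [AddCommGroup V] [Module K V] [AddCommGroup W] [Module K W]

theorem finrank_comap_subtype (p q : Submodule K V) :
    finrank K ↥(Submodule.comap q.subtype p) = finrank K ↥(q ⊓ p) := by
  have h : Submodule.comap q.subtype p = Submodule.comap q.subtype (q ⊓ p) := by
    ext x; simp [x.2]
  rw [h]
  exact (Submodule.comapSubtypeEquivOfLe inf_le_left).finrank_eq

-- lemma C
theorem coker_T_count (T : U →ₗ[K] V) (S : V →ₗ[K] W)
    (h3 : FiniteDimensional K (V ⧸ range T)) :
    finrank K (V ⧸ range T) = finrank K (V ⧸ (range T ⊔ ker S))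
      + finrank K ↥(Submodule.map (range T).mkQ (ker S)) := by
  haveI := h3
  have h := (Submodule.map (range T).mkQ (ker S)).finrank_quotient_add_finrank
  have e := Submodule.quotientQuotientEquivQuotientSup (range T) (ker S)
  rw [e.finrank_eq] at h
  omega

-- lemma D
theorem ker_S_count (T : U →ₗ[K] V) (S : V →ₗ[K] W)
    (h2 : FiniteDimensional K (ker S)) :
    finrank K (ker S) = finrank K ↥(ker S ⊓ range T)
      + finrank K ↥(Submodule.map (range T).mkQ (ker S)) := by
  haveI := h2
  set h : ↥(ker S) →ₗ[K] V ⧸ range T := (range T).mkQ.domRestrict (ker S) with hh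
  have hrn := LinearMap.finrank_range_add_finrank_ker h
  have hr : range h = Submodule.map (range T).mkQ (ker S) := LinearMap.range_domRestrict _ _
  have hk : ker h = Submodule.comap (ker S).subtype (range T) := by
    rw [hh, LinearMap.ker_domRestrict, Submodule.ker_mkQ]
  rw [hr, hk, finrank_comap_subtype] at hrn
  omega

/-- Additivity of the Fredholm index for linear maps (purely algebraic). -/
theorem index_comp (T : U →ₗ[K] V) (S : V →ₗ[K] W)
    (h1 : FiniteDimensional K (ker T)) (h2 : FiniteDimensional K (ker S))
    (h3 : FiniteDimensional K (V ⧸ range T)) (h4 : FiniteDimensional K (W ⧸ range S)) :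
    FiniteDimensional K (ker (S ∘ₗ T)) ∧ FiniteDimensional K (W ⧸ range (S ∘ₗ T)) ∧
    (finrank K (ker (S ∘ₗ T)) : ℤ) - finrank K (W ⧸ range (S ∘ₗ T))
      = ((finrank K (ker S) : ℤ) - finrank K (W ⧸ range S))
        + ((finrank K (ker T) : ℤ) - finrank K (V ⧸ range T)) := by
  obtain ⟨fk, ek⟩ := ker_comp_fd T S h1 h2
  obtain ⟨fc, ec⟩ := coker_comp_fd T S h3 h4
  have eC := coker_T_count T S h3
  have eD := ker_S_count T S h2
  refine ⟨fk, fc, ?_⟩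
  omega

end FredholmAux


open Filter Topology

namespace FredholmAux

variable {X : Type*} [NormedAddCommGroup X] [NormedSpace ℂ X]

/-- Convergent subsequence of compact-operator images of a bounded sequence. -/
theorem exists_conv_subseq (S : X →L[ℂ] X) (hS : IsCompactOperator ⇑S) (u : ℕ → X) {M : ℝ}
    (hu : ∀ n, ‖u n‖ ≤ M) :
    ∃ w, ∃ φ : ℕ → ℕ, StrictMono φ ∧ Tendsto (fun n => S (u (φ n))) atTop (𝓝 w) := by
  have hC : IsCompact (closure (⇑S '' Metric.closedBall 0 M)) :=
    IsCompactOperator.isCompact_closure_image_closedBall (f := (S : X →ₗ[ℂ] X)) hS M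
  have hmem : ∀ n, S (u n) ∈ closure (⇑S '' Metric.closedBall 0 M) := fun n =>
    subset_closure ⟨u n, by simpa [Metric.mem_closedBall, dist_zero_right] using hu n, rfl⟩
  obtain ⟨w, _, φ, hφ, hconv⟩ := hC.tendsto_subseq hmem
  exact ⟨w, φ, hφ, hconv⟩

/-- The kernel of a compact perturbation of the identity is finite dimensional. -/
theorem ker_fd (T : X →L[ℂ] X) (hK : IsCompactOperator ⇑(T - 1)) :
    FiniteDimensional ℂ ↥(LinearMap.ker T.toLinearMap) := by
  set C := closure (⇑(T - 1) '' Metric.closedBall 0 1) with hCdef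
  have hC : IsCompact C :=
    IsCompactOperator.isCompact_closure_image_closedBall (f := ((T - 1 : X →L[ℂ] X) : X →ₗ[ℂ] X))
      hK 1
  have hCneg : IsCompact (-C) := hC.neg
  have hclosedker : IsClosed ((LinearMap.ker T.toLinearMap : Submodule ℂ X) : Set X) :=
    ContinuousLinearMap.isClosed_ker T
  have hball : IsCompact (Metric.closedBall (0 : ↥(LinearMap.ker T.toLinearMap)) 1) := by
    have hpre : IsCompact ((Subtype.val : ↥(LinearMap.ker T.toLinearMap) → X) ⁻¹' (-C)) :=
      hclosedker.isClosedEmbedding_subtypeVal.isCompact_preimage hCneg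
    apply hpre.of_isClosed_subset Metric.isClosed_closedBall
    intro x hx
    have hxn : ‖(x : X)‖ ≤ 1 := by
      simpa [Metric.mem_closedBall, dist_zero_right] using hx
    have hxmem : (x : X) ∈ Metric.closedBall (0 : X) 1 := by
      simpa [Metric.mem_closedBall, dist_zero_right] using hxn
    have hxk : T (x : X) = 0 := x.2
    have hval : (T - 1) (x : X) = -(x : X) := by
      simp [ContinuousLinearMap.sub_apply, hxk]
    show (x : X) ∈ -C
    rw [Set.mem_neg]
    exact subset_closure ⟨x, hxmem, hval⟩
  exact FiniteDimensional.of_isCompact_closedBall₀ ℂ one_pos hball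

variable [CompleteSpace X]

/-- The quantitative bound: distance-to-kernel control. -/
theorem dist_ker_bound (T : X →L[ℂ] X) (hK : IsCompactOperator ⇑(T - 1)) :
    ∃ c : ℝ, 0 < c ∧ ∀ x : X, Metric.infDist x (LinearMap.ker T.toLinearMap) ≤ c * ‖T x‖ := by
  by_contra hcon
  push_neg at hcon
  have key : ∀ n : ℕ, ∃ z : X, ‖z‖ ≤ 2 ∧ ‖T z‖ ≤ 1 / (n + 1) ∧
      ∀ k ∈ LinearMap.ker T.toLinearMap, 1 ≤ ‖z - k‖ := by
    intro n
    obtain ⟨x, hx⟩ := hcon (n + 1) (by positivity)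
    set d := Metric.infDist x (LinearMap.ker T.toLinearMap) with hd
    have hTd : (n + 1 : ℝ) * ‖T x‖ < d := hx
    have hdpos : 0 < d := lt_of_le_of_lt (by positivity) hTd
    obtain ⟨k₀, hk₀mem, hk₀⟩ : ∃ k₀ ∈ (LinearMap.ker T.toLinearMap : Submodule ℂ X), dist x k₀ < 2 * d :=
      Metric.infDist_lt_iff (⟨0, Submodule.zero_mem _⟩) |>.mp (by rw [← hd]; linarith)
    refine ⟨((d : ℂ))⁻¹ • (x - k₀), ?_, ?_, ?_⟩
    · rw [norm_smul, norm_inv, Complex.norm_real, Real.norm_eq_abs, abs_of_pos hdpos]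
      have h2 : ‖x - k₀‖ < 2 * d := by rwa [← dist_eq_norm]
      calc d⁻¹ * ‖x - k₀‖ ≤ d⁻¹ * (2 * d) :=
            mul_le_mul_of_nonneg_left (le_of_lt h2) (by positivity)
        _ = 2 := by field_simp
    · rw [map_smul, norm_smul, norm_inv, Complex.norm_real, Real.norm_eq_abs, abs_of_pos hdpos]
      have hTk : T (x - k₀) = T x := by
        rw [map_sub, show T k₀ = 0 from LinearMap.mem_ker.mp hk₀mem, sub_zero]
      rw [hTk]
      have h1 : ‖T x‖ ≤ d / (n + 1) := by
        rw [le_div_iff₀ (by positivity)]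
        nlinarith [hTd]
      calc d⁻¹ * ‖T x‖ ≤ d⁻¹ * (d / (n + 1)) :=
            mul_le_mul_of_nonneg_left h1 (by positivity)
        _ = 1 / (n + 1) := by field_simp
    · intro k hkmem
      have hker' : k₀ + (d : ℂ) • k ∈ (LinearMap.ker T.toLinearMap : Submodule ℂ X) :=
        Submodule.add_mem _ hk₀mem (Submodule.smul_mem _ _ hkmem)
      have hge : d ≤ ‖x - (k₀ + (d : ℂ) • k)‖ := by
        rw [← dist_eq_norm]
        exact Metric.infDist_le_dist_of_mem hker'
      have heq : ((d : ℂ))⁻¹ • (x - k₀) - k = ((d : ℂ))⁻¹ • (x - (k₀ + (d : ℂ) • k)) := by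
        have hdne : (d : ℂ) ≠ 0 := by
          exact_mod_cast ne_of_gt hdpos
        rw [smul_sub, smul_sub, smul_add, smul_smul, inv_mul_cancel₀ hdne, one_smul]
        abel
      rw [heq, norm_smul, norm_inv, Complex.norm_real, Real.norm_eq_abs, abs_of_pos hdpos]
      rw [← inv_mul_cancel₀ (ne_of_gt hdpos)]
      exact mul_le_mul_of_nonneg_left hge (by positivity)
  choose z hz2 hzT hzsep using key
  obtain ⟨w, φ, hφ, hconv⟩ := exists_conv_subseq (T - 1) hK z hz2
  have hTz : Tendsto (fun n => T (z (φ n))) atTop (𝓝 0) := by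
    have h1 : Tendsto (fun n => ‖T (z (φ n))‖) atTop (𝓝 0) := by
      refine squeeze_zero (fun n => norm_nonneg _) (fun n => ?_) tendsto_one_div_add_atTop_nhds_zero_nat
      refine le_trans (hzT (φ n)) ?_
      have h2 : (n : ℝ) + 1 ≤ (φ n : ℝ) + 1 := by
        have := hφ.le_apply (x := n)
        exact_mod_cast by omega
      exact one_div_le_one_div_of_le (by positivity) h2
    exact tendsto_zero_iff_norm_tendsto_zero.mpr h1
  have hzconv : Tendsto (fun n => z (φ n)) atTop (𝓝 (-w)) := by
    have heq : ∀ n, z (φ n) = T (z (φ n)) - (T - 1) (z (φ n)) := by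
      intro n; simp [ContinuousLinearMap.sub_apply]
    have hfun : (fun n => z (φ n)) = fun n => T (z (φ n)) - (T - 1) (z (φ n)) := funext heq
    rw [hfun, show (𝓝 (-w)) = 𝓝 (0 - w) by rw [zero_sub]]
    exact hTz.sub hconv
  have hwker : -w ∈ (LinearMap.ker T.toLinearMap : Submodule ℂ X) := by
    have hTcont : Tendsto (fun n => T (z (φ n))) atTop (𝓝 (T (-w))) :=
      (T.continuous.tendsto _).comp hzconv
    exact LinearMap.mem_ker.mpr (tendsto_nhds_unique hTcont hTz)
  have hdist : Tendsto (fun n => ‖z (φ n) - (-w)‖) atTop (𝓝 0) := by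
    have h3 := hzconv.sub (tendsto_const_nhds (x := -w))
    rw [sub_self] at h3
    have h4 := h3.norm
    rw [norm_zero] at h4
    exact h4
  have hbad : (1 : ℝ) ≤ 0 :=
    le_of_tendsto_of_tendsto' tendsto_const_nhds hdist fun n => hzsep (φ n) _ hwker
  linarith

end FredholmAux

namespace FredholmAux

variable {X : Type*} [NormedAddCommGroup X] [NormedSpace ℂ X] [CompleteSpace X]

/-- The range of a compact perturbation of the identity is closed. -/
theorem range_closed (T : X →L[ℂ] X) (hK : IsCompactOperator ⇑(T - 1)) :
    IsClosed ((LinearMap.range T.toLinearMap : Submodule ℂ X) : Set X) := by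
  obtain ⟨c, hc, hbound⟩ := dist_ker_bound T hK
  rw [← isSeqClosed_iff_isClosed]
  intro u y hu hy
  -- u n ∈ range T, u → y; write u n = T (x n)
  choose x hx using hu
  -- bound on ‖u n‖
  have hbdd : BddAbove (Set.range fun n => ‖u n‖) := hy.norm.bddAbove_range
  obtain ⟨B, hB⟩ := hbdd
  have hBn : ∀ n, ‖u n‖ ≤ B := fun n => hB ⟨n, rfl⟩
  -- good representatives
  have hrep : ∀ n, ∃ v : X, T v = u n ∧ ‖v‖ ≤ c * B + 1 := by
    intro n
    have h1 : Metric.infDist (x n) (LinearMap.ker T.toLinearMap) ≤ c * B := by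
      calc Metric.infDist (x n) (LinearMap.ker T.toLinearMap) ≤ c * ‖T (x n)‖ := hbound (x n)
        _ = c * ‖u n‖ := by rw [show T (x n) = u n from hx n]
        _ ≤ c * B := by
            exact mul_le_mul_of_nonneg_left (hBn n) (le_of_lt hc)
    obtain ⟨k, hkmem, hk⟩ : ∃ k ∈ (LinearMap.ker T.toLinearMap : Submodule ℂ X), dist (x n) k < c * B + 1 :=
      Metric.infDist_lt_iff (⟨0, Submodule.zero_mem _⟩) |>.mp (by linarith)
    refine ⟨x n - k, ?_, ?_⟩
    · rw [map_sub, show T k = 0 from LinearMap.mem_ker.mp hkmem, sub_zero, show T (x n) = u n from hx n]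
    · rw [← dist_eq_norm]; exact le_of_lt hk
  choose v hv hvB using hrep
  obtain ⟨w, φ, hφ, hconv⟩ := exists_conv_subseq (T - 1) hK v hvB
  have hTv : Tendsto (fun n => T (v (φ n))) atTop (𝓝 y) := by
    have : (fun n => T (v (φ n))) = (fun n => u (φ n)) := funext fun n => hv (φ n)
    rw [this]
    exact hy.comp hφ.tendsto_atTop
  have hvconv : Tendsto (fun n => v (φ n)) atTop (𝓝 (y - w)) := by
    have hfun : (fun n => v (φ n)) = fun n => T (v (φ n)) - (T - 1) (v (φ n)) := by
      funext n; simp [ContinuousLinearMap.sub_apply]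
    rw [hfun]
    exact hTv.sub hconv
  have : T (y - w) = y := by
    have hTc : Tendsto (fun n => T (v (φ n))) atTop (𝓝 (T (y - w))) :=
      (T.continuous.tendsto _).comp hvconv
    exact tendsto_nhds_unique hTc hTv
  exact ⟨y - w, this⟩

end FredholmAux

namespace FredholmAux

variable {X : Type*} [NormedAddCommGroup X] [NormedSpace ℂ X]

theorem pow_sub_one_compact (T : X →L[ℂ] X) (hK : IsCompactOperator ⇑(T - 1)) :
    ∀ m : ℕ, 1 ≤ m → IsCompactOperator ⇑(T ^ m - 1) := by
  intro m hm
  induction m with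
  | zero => omega
  | succ m ih =>
    rcases Nat.eq_or_lt_of_le hm with h1 | h2
    · rw [← h1, pow_one]; exact hK
    · have hm1 : 1 ≤ m := by omega
      have hIH := ih hm1
      have heq : ⇑(T ^ (m + 1) - 1) = ⇑(T ^ m - 1) + ⇑(T ^ m) ∘ ⇑(T - 1) := by
        funext x
        simp only [ContinuousLinearMap.sub_apply, ContinuousLinearMap.add_apply,
          ContinuousLinearMap.one_apply, Pi.add_apply, Function.comp_apply, pow_succ,
          ContinuousLinearMap.mul_apply, map_sub]
        abel
      rw [heq]
      exact hIH.add (hK.clm_comp (T ^ m))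

/-- Riesz-type separation for nested closed submodules. -/
theorem riesz_sep {F G : Submodule ℂ X} (hFG : F < G) (hFc : IsClosed (F : Set X)) :
    ∃ u : X, u ∈ G ∧ ‖u‖ = 1 ∧ ∀ y ∈ F, 1 / 2 ≤ ‖u - y‖ := by
  set F' : Submodule ℂ ↥G := F.comap G.subtype with hF'
  have hF'c : IsClosed (F' : Set ↥G) := IsClosed.preimage continuous_subtype_val hFc
  have hFle : F ≤ G := le_of_lt hFG
  obtain ⟨x, hxG, hxF⟩ := SetLike.exists_of_lt hFG
  have hex : ∃ z : ↥G, z ∉ F' := ⟨⟨x, hxG⟩, by simpa [hF'] using hxF⟩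
  obtain ⟨x₀, hx₀F, hx₀sep⟩ := riesz_lemma hF'c hex (by norm_num : (1 / 2 : ℝ) < 1)
  have hx₀ne : ‖x₀‖ ≠ 0 := by
    intro h
    exact hx₀F (by rw [norm_eq_zero] at h; rw [h]; exact Submodule.zero_mem _)
  have hx₀pos : 0 < ‖x₀‖ := lt_of_le_of_ne (norm_nonneg _) (Ne.symm hx₀ne)
  refine ⟨((‖x₀‖ : ℂ))⁻¹ • (x₀ : X), ?_, ?_, ?_⟩
  · exact Submodule.smul_mem _ _ x₀.2
  · rw [norm_smul, norm_inv, Complex.norm_real, Real.norm_eq_abs, abs_of_pos hx₀pos]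
    exact inv_mul_cancel₀ hx₀ne
  · intro y hyF
    have hy' : (‖x₀‖ : ℂ) • y ∈ F := Submodule.smul_mem _ _ hyF
    have hy'G : (‖x₀‖ : ℂ) • y ∈ G := hFle hy'
    have hmem : (⟨(‖x₀‖ : ℂ) • y, hy'G⟩ : ↥G) ∈ F' := by simpa [hF'] using hy'
    have hineq := hx₀sep _ hmem
    have hnorm : ‖x₀ - (⟨(‖x₀‖ : ℂ) • y, hy'G⟩ : ↥G)‖ = ‖(x₀ : X) - (‖x₀‖ : ℂ) • y‖ := rfl
    rw [hnorm] at hineq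
    have heq : ((‖x₀‖ : ℂ))⁻¹ • (x₀ : X) - y
        = ((‖x₀‖ : ℂ))⁻¹ • ((x₀ : X) - (‖x₀‖ : ℂ) • y) := by
      have hne : (‖x₀‖ : ℂ) ≠ 0 := by exact_mod_cast hx₀ne
      rw [smul_sub, smul_smul, inv_mul_cancel₀ hne, one_smul]
    rw [heq, norm_smul, norm_inv, Complex.norm_real, Real.norm_eq_abs, abs_of_pos hx₀pos]
    calc (1 / 2 : ℝ) = ‖x₀‖⁻¹ * (1 / 2 * ‖x₀‖) := by
          rw [mul_comm (1 / 2 : ℝ) ‖x₀‖, ← mul_assoc, inv_mul_cancel₀ hx₀ne, one_mul]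
      _ ≤ ‖x₀‖⁻¹ * ‖(x₀ : X) - (‖x₀‖ : ℂ) • y‖ := by
          apply mul_le_mul_of_nonneg_left hineq (by positivity)

/-- There is no bounded sequence whose images under a compact operator are uniformly
separated. -/
theorem no_sep_seq (S : X →L[ℂ] X) (hS : IsCompactOperator ⇑S) (u : ℕ → X)
    (hn : ∀ n, ‖u n‖ = 1) (hsep : ∀ m n, m < n → 1 / 2 ≤ ‖S (u n) - S (u m)‖) : False := by
  obtain ⟨w, φ, hφ, hconv⟩ := exists_conv_subseq S hS u (M := 1) (fun n => le_of_eq (hn n))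
  have hcauchy : CauchySeq fun n => S (u (φ n)) := hconv.cauchySeq
  rw [Metric.cauchySeq_iff] at hcauchy
  obtain ⟨N, hN⟩ := hcauchy (1 / 2) (by norm_num)
  have h1 := hN (N + 1) (by omega) N (by omega)
  have h2 : φ N < φ (N + 1) := hφ (by omega)
  have h3 := hsep (φ N) (φ (N + 1)) h2
  rw [dist_eq_norm] at h1
  linarith

theorem ker_pow_mono (T : X →L[ℂ] X) {i j : ℕ} (hij : i ≤ j) :
    LinearMap.ker (T ^ i).toLinearMap ≤ LinearMap.ker (T ^ j).toLinearMap := by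
  obtain ⟨k, rfl⟩ : ∃ k, j = k + i := ⟨j - i, by omega⟩
  intro x hx
  have hx' : (T ^ i) x = 0 := hx
  show (T ^ (k + i)) x = 0
  rw [pow_add, ContinuousLinearMap.mul_apply, hx', map_zero]

theorem range_pow_anti (T : X →L[ℂ] X) {i j : ℕ} (hij : i ≤ j) :
    LinearMap.range (T ^ j).toLinearMap ≤ LinearMap.range (T ^ i).toLinearMap := by
  obtain ⟨k, rfl⟩ : ∃ k, j = i + k := ⟨j - i, by omega⟩
  rintro y ⟨x, rfl⟩
  exact ⟨(T ^ k) x, by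
    show (T ^ i) ((T ^ k) x) = (T ^ (i + k)) x
    rw [pow_add, ContinuousLinearMap.mul_apply]⟩

theorem ker_pow_propagate (T : X →L[ℂ] X) {m : ℕ}
    (h : LinearMap.ker (T ^ (m + 1)).toLinearMap = LinearMap.ker (T ^ m).toLinearMap) :
    ∀ j, LinearMap.ker (T ^ (m + j)).toLinearMap = LinearMap.ker (T ^ m).toLinearMap := by
  intro j
  induction j with
  | zero => rfl
  | succ j ih =>
    apply le_antisymm
    · intro x hx
      have hTx : T x ∈ LinearMap.ker (T ^ (m + j)).toLinearMap := by
        have : (T ^ (m + j)) (T x) = 0 := by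
          have hx' : (T ^ (m + j + 1)) x = 0 := hx
          rw [pow_succ, ContinuousLinearMap.mul_apply] at hx'
          exact hx'
        exact this
      rw [ih] at hTx
      have : x ∈ LinearMap.ker (T ^ (m + 1)).toLinearMap := by
        show (T ^ (m + 1)) x = 0
        rw [pow_succ, ContinuousLinearMap.mul_apply]
        exact hTx
      rw [h] at this
      exact this
    · exact ker_pow_mono T (by omega)

theorem range_pow_propagate (T : X →L[ℂ] X) {m : ℕ}
    (h : LinearMap.range (T ^ (m + 1)).toLinearMap = LinearMap.range (T ^ m).toLinearMap) :
    ∀ j, LinearMap.range (T ^ (m + j)).toLinearMap = LinearMap.range (T ^ m).toLinearMap := by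
  intro j
  induction j with
  | zero => rfl
  | succ j ih =>
    apply le_antisymm
    · exact range_pow_anti T (by omega)
    · intro y hy
      rw [← ih] at hy
      obtain ⟨x, rfl⟩ := hy
      have hTx : (T ^ m) x ∈ LinearMap.range (T ^ (m + 1)).toLinearMap := by
        rw [h]; exact ⟨x, rfl⟩
      obtain ⟨z, hz⟩ := hTx
      refine ⟨z, ?_⟩
      calc (T ^ (m + (j + 1))) z = (T ^ j) ((T ^ (m + 1)) z) := by
            rw [← ContinuousLinearMap.mul_apply, ← pow_add,
              show m + (j + 1) = j + (m + 1) by omega]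
        _ = (T ^ j) ((T ^ m) x) := by rw [show (T ^ (m + 1)) z = (T ^ m) x from hz]
        _ = (T ^ (m + j)) x := by
            rw [← ContinuousLinearMap.mul_apply, ← pow_add, Nat.add_comm]

end FredholmAux

namespace FredholmAux

variable {X : Type*} [NormedAddCommGroup X] [NormedSpace ℂ X]

theorem ascent_stab (T : X →L[ℂ] X) (hK : IsCompactOperator ⇑(T - 1)) :
    ∃ p : ℕ, 1 ≤ p ∧ ∀ q, p ≤ q → LinearMap.ker (T ^ q).toLinearMap = LinearMap.ker (T ^ p).toLinearMap := by
  by_contra hcon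
  push_neg at hcon
  have hstrict : ∀ m, 1 ≤ m → LinearMap.ker (T ^ m).toLinearMap < LinearMap.ker (T ^ (m + 1)).toLinearMap := by
    intro m hm
    rcases lt_or_eq_of_le (ker_pow_mono T (Nat.le_succ m)) with h | h
    · exact h
    · exfalso
      obtain ⟨q, hq, hne⟩ := hcon m hm
      apply hne
      obtain ⟨j, rfl⟩ : ∃ j, q = m + j := ⟨q - m, by omega⟩
      exact ker_pow_propagate T h.symm j
  have hsel : ∀ m : ℕ, ∃ u : X, u ∈ LinearMap.ker (T ^ (m + 2)).toLinearMap ∧ ‖u‖ = 1 ∧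
      ∀ y ∈ LinearMap.ker (T ^ (m + 1)).toLinearMap, 1 / 2 ≤ ‖u - y‖ := fun m =>
    riesz_sep (hstrict (m + 1) (by omega)) (ContinuousLinearMap.isClosed_ker _)
  choose u hmem hnrm hsep using hsel
  apply no_sep_seq (T - 1) hK u hnrm
  intro m n hmn
  have heq : (T - 1) (u n) - (T - 1) (u m)
      = -(u n - (T (u n) - T (u m) + u m)) := by
    simp only [ContinuousLinearMap.sub_apply, ContinuousLinearMap.one_apply]
    abel
  rw [heq, norm_neg]
  apply hsep n
  have h1 : T (u n) ∈ LinearMap.ker (T ^ (n + 1)).toLinearMap := by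
    show (T ^ (n + 1)) (T (u n)) = 0
    rw [← ContinuousLinearMap.mul_apply, ← pow_succ]
    exact hmem n
  have h2 : T (u m) ∈ LinearMap.ker (T ^ (n + 1)).toLinearMap := by
    apply ker_pow_mono T (show m + 1 ≤ n + 1 by omega)
    show (T ^ (m + 1)) (T (u m)) = 0
    rw [← ContinuousLinearMap.mul_apply, ← pow_succ]
    exact hmem m
  have h3 : u m ∈ LinearMap.ker (T ^ (n + 1)).toLinearMap :=
    ker_pow_mono T (show m + 2 ≤ n + 1 by omega) (hmem m)
  exact Submodule.add_mem _ (Submodule.sub_mem _ h1 h2) h3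

variable [CompleteSpace X]

theorem descent_stab (T : X →L[ℂ] X) (hK : IsCompactOperator ⇑(T - 1)) :
    ∃ p : ℕ, 1 ≤ p ∧ ∀ q, p ≤ q → LinearMap.range (T ^ q).toLinearMap = LinearMap.range (T ^ p).toLinearMap := by
  by_contra hcon
  push_neg at hcon
  have hstrict : ∀ m, 1 ≤ m →
      LinearMap.range (T ^ (m + 1)).toLinearMap < LinearMap.range (T ^ m).toLinearMap := by
    intro m hm
    rcases lt_or_eq_of_le (range_pow_anti T (Nat.le_succ m)) with h | h
    · exact h
    · exfalso
      obtain ⟨q, hq, hne⟩ := hcon m hm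
      apply hne
      obtain ⟨j, rfl⟩ : ∃ j, q = m + j := ⟨q - m, by omega⟩
      exact range_pow_propagate T h j
  have hsel : ∀ m : ℕ, ∃ u : X, u ∈ LinearMap.range (T ^ (m + 1)).toLinearMap ∧ ‖u‖ = 1 ∧
      ∀ y ∈ LinearMap.range (T ^ (m + 2)).toLinearMap, 1 / 2 ≤ ‖u - y‖ := fun m =>
    riesz_sep (hstrict (m + 1) (by omega))
      (range_closed (T ^ (m + 2)) (pow_sub_one_compact T hK (m + 2) (by omega)))
  choose u hmem hnrm hsep using hsel
  apply no_sep_seq (T - 1) hK u hnrm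
  intro m n hmn
  rw [norm_sub_rev]
  have heq : (T - 1) (u m) - (T - 1) (u n)
      = -(u m - (T (u m) - T (u n) + u n)) := by
    simp only [ContinuousLinearMap.sub_apply, ContinuousLinearMap.one_apply]
    abel
  rw [heq, norm_neg]
  apply hsep m
  have hTmem : ∀ k, T (u k) ∈ LinearMap.range (T ^ (k + 2)).toLinearMap := by
    intro k
    obtain ⟨x, hx⟩ := hmem k
    refine ⟨x, ?_⟩
    rw [← hx]
    show (T ^ (k + 2)) x = T ((T ^ (k + 1)) x)
    rw [← ContinuousLinearMap.mul_apply, ← pow_succ']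
  have h1 : T (u m) ∈ LinearMap.range (T ^ (m + 2)).toLinearMap := hTmem m
  have h2 : T (u n) ∈ LinearMap.range (T ^ (m + 2)).toLinearMap :=
    range_pow_anti T (show m + 2 ≤ n + 2 by omega) (hTmem n)
  have h3 : u n ∈ LinearMap.range (T ^ (m + 2)).toLinearMap :=
    range_pow_anti T (show m + 2 ≤ n + 1 by omega) (hmem n)
  exact Submodule.add_mem _ (Submodule.sub_mem _ h1 h2) h3

end FredholmAux

namespace FredholmAux

open Submodule

variable {X : Type*} [NormedAddCommGroup X] [NormedSpace ℂ X] [CompleteSpace X]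

theorem finrank_comap_subtype' (p q : Submodule ℂ X) :
    finrank ℂ ↥(Submodule.comap q.subtype p) = finrank ℂ ↥(q ⊓ p) := by
  have h : Submodule.comap q.subtype p = Submodule.comap q.subtype (q ⊓ p) := by
    ext x; simp [x.2]
  rw [h]
  exact (Submodule.comapSubtypeEquivOfLe inf_le_left).finrank_eq

/-- **Riesz–Fredholm**: a compact perturbation of the identity has index zero. -/
theorem riesz_index (T : X →L[ℂ] X) (hK : IsCompactOperator ⇑(T - 1)) :
    FiniteDimensional ℂ ↥(LinearMap.ker T.toLinearMap) ∧ FiniteDimensional ℂ (X ⧸ LinearMap.range T.toLinearMap) ∧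
      finrank ℂ ↥(LinearMap.ker T.toLinearMap) = finrank ℂ (X ⧸ LinearMap.range T.toLinearMap) := by
  obtain ⟨p₁, hp₁, hs₁⟩ := ascent_stab T hK
  obtain ⟨p₂, hp₂, hs₂⟩ := descent_stab T hK
  set p := max p₁ p₂ with hp
  have hp1 : 1 ≤ p := le_trans hp₁ (le_max_left _ _)
  have hNstab : ∀ q, p ≤ q → LinearMap.ker (T ^ q).toLinearMap = LinearMap.ker (T ^ p).toLinearMap := by
    intro q hq
    rw [hs₁ q (le_trans (le_max_left _ _) hq), hs₁ p (le_max_left _ _)]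
  have hRstab : ∀ q, p ≤ q → LinearMap.range (T ^ q).toLinearMap = LinearMap.range (T ^ p).toLinearMap := by
    intro q hq
    rw [hs₂ q (le_trans (le_max_right _ _) hq), hs₂ p (le_max_right _ _)]
  set N : Submodule ℂ X := LinearMap.ker (T ^ p).toLinearMap with hN
  set Rp : Submodule ℂ X := LinearMap.range (T ^ p).toLinearMap with hRp
  haveI hNfd : FiniteDimensional ℂ ↥N := ker_fd (T ^ p) (pow_sub_one_compact T hK p hp1)
  -- complementarity
  have hdisj : N ⊓ Rp = ⊥ := by
    rw [eq_bot_iff]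
    rintro x ⟨hxN, y, rfl⟩
    have hyN : y ∈ LinearMap.ker (T ^ (p + p)).toLinearMap := by
      show (T ^ (p + p)) y = 0
      rw [pow_add, ContinuousLinearMap.mul_apply]
      exact hxN
    rw [hNstab (p + p) (by omega)] at hyN
    simp only [Submodule.mem_bot]
    exact hyN
  have hsup : N ⊔ Rp = ⊤ := by
    rw [eq_top_iff]
    intro x _
    have hx : (T ^ p) x ∈ LinearMap.range (T ^ (p + p)).toLinearMap := by
      rw [hRstab (p + p) (by omega)]
      exact ⟨x, rfl⟩
    obtain ⟨y, hy⟩ := hx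
    have h1 : x - (T ^ p) y ∈ N := by
      show (T ^ p) (x - (T ^ p) y) = 0
      rw [map_sub, ← ContinuousLinearMap.mul_apply, ← pow_add,
        show (T ^ (p + p)) y = (T ^ p) x from hy, sub_self]
    have h2 : (T ^ p) y ∈ Rp := ⟨y, rfl⟩
    have : x = (x - (T ^ p) y) + (T ^ p) y := by abel
    rw [this]
    exact Submodule.add_mem_sup h1 h2
  -- T preserves N
  have hTN : ∀ v ∈ N, T v ∈ N := by
    intro v hv
    show (T ^ p) (T v) = 0
    have hv' : (T ^ p) v = 0 := hv
    rw [← ContinuousLinearMap.mul_apply, ← pow_succ, pow_succ',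
      ContinuousLinearMap.mul_apply, hv', map_zero]
  set Tl : X →ₗ[ℂ] X := (T : X →ₗ[ℂ] X) with hTl
  have hTNl : ∀ v ∈ N, Tl v ∈ N := hTN
  set T' : ↥N →ₗ[ℂ] ↥N := Tl.restrict hTNl with hT'
  -- ker T ≤ N
  have hkerTeq : LinearMap.ker Tl = LinearMap.ker T.toLinearMap := rfl
  have hrangeTeq : LinearMap.range Tl = LinearMap.range T.toLinearMap := rfl
  have hkerle : LinearMap.ker T.toLinearMap ≤ N := by
    have h1 : LinearMap.ker (T ^ 1).toLinearMap ≤ LinearMap.ker (T ^ p).toLinearMap := ker_pow_mono T hp1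
    rwa [pow_one] at h1
  -- kernel count
  have hkerT' : finrank ℂ ↥(LinearMap.ker T') = finrank ℂ ↥(LinearMap.ker T.toLinearMap) := by
    rw [LinearMap.ker_restrict hTNl, finrank_comap_subtype', hkerTeq,
      inf_eq_right.mpr hkerle]
  -- range decomposition
  have hmapN_le : Submodule.map Tl N ≤ N := Submodule.map_le_iff_le_comap.mpr hTNl
  have hmapRp : Submodule.map Tl Rp = Rp := by
    have h1 : Submodule.map Tl Rp = LinearMap.range (T ^ (p + 1)).toLinearMap := by
      ext y
      constructor
      · rintro ⟨x, ⟨z, rfl⟩, rfl⟩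
        exact ⟨z, by
          show (T ^ (p + 1)) z = T ((T ^ p) z)
          rw [pow_succ', ContinuousLinearMap.mul_apply]⟩
      · rintro ⟨z, rfl⟩
        refine ⟨(T ^ p) z, ⟨z, rfl⟩, ?_⟩
        show T ((T ^ p) z) = (T ^ (p + 1)) z
        rw [pow_succ', ContinuousLinearMap.mul_apply]
    rw [h1, hRstab (p + 1) (by omega)]
  have hrangeT : LinearMap.range T.toLinearMap = Submodule.map Tl N ⊔ Rp := by
    rw [← hrangeTeq, LinearMap.range_eq_map, ← hsup, Submodule.map_sup, hmapRp]
  -- the quotient map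
  set g : ↥N →ₗ[ℂ] X ⧸ LinearMap.range T.toLinearMap := (LinearMap.range T.toLinearMap).mkQ ∘ₗ N.subtype with hg
  have hRple : Rp ≤ LinearMap.range T.toLinearMap := by
    have h1 : LinearMap.range (T ^ p).toLinearMap ≤ LinearMap.range (T ^ 1).toLinearMap := range_pow_anti T hp1
    rwa [pow_one] at h1
  have hgsurj : Function.Surjective g := by
    intro c
    obtain ⟨x, rfl⟩ := Submodule.Quotient.mk_surjective _ c
    have hx : x ∈ N ⊔ Rp := by rw [hsup]; trivial
    obtain ⟨a, ha, b, hb, rfl⟩ := Submodule.mem_sup.mp hx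
    refine ⟨⟨a, ha⟩, ?_⟩
    show Submodule.Quotient.mk a = Submodule.Quotient.mk (a + b)
    rw [Submodule.Quotient.eq]
    have : a - (a + b) = -b := by abel
    rw [this]
    exact Submodule.neg_mem _ (hRple hb)
  have hkerg : LinearMap.ker g = Submodule.comap N.subtype (LinearMap.range T.toLinearMap) := by
    rw [hg, LinearMap.ker_comp, Submodule.ker_mkQ]
  have hinfN : N ⊓ LinearMap.range T.toLinearMap = Submodule.map Tl N := by
    rw [hrangeT, inf_comm, sup_inf_assoc_of_le Rp hmapN_le, inf_comm (α := Submodule ℂ X) Rp N,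
      hdisj, sup_bot_eq]
  have hkerg_rank : finrank ℂ ↥(LinearMap.ker g) = finrank ℂ ↥(Submodule.map Tl N) := by
    rw [hkerg, finrank_comap_subtype', hinfN]
  -- range T' maps onto map Tl N
  have hmaprange : Submodule.map N.subtype (LinearMap.range T') = Submodule.map Tl N := by
    ext y
    constructor
    · rintro ⟨z, ⟨v, rfl⟩, rfl⟩
      exact ⟨(v : X), v.2, rfl⟩
    · rintro ⟨x, hx, rfl⟩
      exact ⟨T' ⟨x, hx⟩, ⟨⟨x, hx⟩, rfl⟩, rfl⟩
  have hrangeT'_rank : finrank ℂ ↥(LinearMap.range T') = finrank ℂ ↥(Submodule.map Tl N) := by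
    rw [← hmaprange]
    exact (Submodule.equivMapOfInjective N.subtype (Submodule.injective_subtype N)
      (LinearMap.range T')).finrank_eq
  -- the equivalence for the cokernel
  have e : (↥N ⧸ LinearMap.ker g) ≃ₗ[ℂ] X ⧸ LinearMap.range T.toLinearMap :=
    g.quotKerEquivOfSurjective hgsurj
  haveI : FiniteDimensional ℂ (X ⧸ LinearMap.range T.toLinearMap) := e.finiteDimensional
  have hcoker_rank : finrank ℂ (X ⧸ LinearMap.range T.toLinearMap)
      = finrank ℂ ↥N - finrank ℂ ↥(LinearMap.ker g) := by
    rw [← e.finrank_eq]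
    have h1 := (LinearMap.ker g).finrank_quotient_add_finrank
    omega
  -- rank-nullity for T'
  have hrn := LinearMap.finrank_range_add_finrank_ker T'
  -- kernel finite dimensional
  have hkerfd : FiniteDimensional ℂ ↥(LinearMap.ker T.toLinearMap) := ker_fd T hK
  refine ⟨hkerfd, inferInstance, ?_⟩
  -- counting
  have hkerg_le : finrank ℂ ↥(LinearMap.ker g) ≤ finrank ℂ ↥N :=
    Submodule.finrank_le _
  rw [hkerTeq, hrangeTeq]
  omega

end FredholmAux

namespace FredholmAux

open LinearMap

variable {E : Type*} [NormedAddCommGroup E] [NormedSpace ℂ E] [CompleteSpace E]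

theorem proj_range_eq_ker (P : E →L[ℂ] E) (hP : P * P = P) :
    LinearMap.range P.toLinearMap = LinearMap.ker (1 - P).toLinearMap := by
  ext x
  constructor
  · rintro ⟨y, rfl⟩
    show (1 - P) (P y) = 0
    have h1 : P (P y) = P y := by rw [← ContinuousLinearMap.mul_apply, hP]
    simp [ContinuousLinearMap.sub_apply, h1]
  · intro hx
    have hx' : x - P x = 0 := by
      simpa [ContinuousLinearMap.sub_apply] using hx
    exact ⟨x, by rw [sub_eq_zero] at hx'; exact hx'.symm⟩

theorem proj_range_closed (P : E →L[ℂ] E) (hP : P * P = P) :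
    IsClosed ((LinearMap.range P.toLinearMap : Submodule ℂ E) : Set E) := by
  rw [proj_range_eq_ker P hP]
  exact ContinuousLinearMap.isClosed_ker _

theorem proj_fix {P : E →L[ℂ] E} (hP : P * P = P) {x : E} (hx : x ∈ LinearMap.range P.toLinearMap) :
    P x = x := by
  obtain ⟨y, rfl⟩ := hx
  show P (P y) = P y
  rw [← ContinuousLinearMap.mul_apply, hP]

/-- Key compactness: if `F` acts as `P ∘ W` on `range P` with `W - P` compact,
then `F - 1` is compact. -/
theorem key_compact {P W : E →L[ℂ] E} (hP : P * P = P)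
    (hWc : IsCompactOperator ⇑(W - P))
    (F : ↥(LinearMap.range P.toLinearMap) →L[ℂ] ↥(LinearMap.range P.toLinearMap))
    (hF : ∀ x : ↥(LinearMap.range P.toLinearMap), (F x : E) = P (W (x : E))) :
    IsCompactOperator ⇑(F - 1) := by
  have hcl := proj_range_closed P hP
  have hDc : IsCompactOperator (⇑P ∘ ⇑(W - P)) := hWc.clm_comp P
  have hg : IsCompactOperator (fun x : ↥(LinearMap.range P.toLinearMap) => P ((W - P) (x : E))) :=
    hDc.comp_clm (LinearMap.range P.toLinearMap).subtypeL
  have hmem : ∀ x : ↥(LinearMap.range P.toLinearMap), P ((W - P) (x : E)) ∈ LinearMap.range P.toLinearMap :=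
    fun x => ⟨(W - P) (x : E), rfl⟩
  have hDrc := hg.codRestrict hmem hcl
  have hfun : ⇑(F - 1) = Set.codRestrict
      (fun x : ↥(LinearMap.range P.toLinearMap) => P ((W - P) (x : E))) (LinearMap.range P.toLinearMap) hmem := by
    funext x
    apply Subtype.ext
    show ((F - 1) x : E) = P ((W - P) (x : E))
    have h1 : ((F - 1) x : E) = (F x : E) - (x : E) := rfl
    have h2 : P (x : E) = (x : E) := proj_fix hP x.2
    rw [h1, hF]
    simp only [ContinuousLinearMap.sub_apply, map_sub, h2]
  rw [hfun]
  exact hDrc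

/-- index additivity for continuous linear maps -/
theorem index_comp_clm {U V W : Type*} [NormedAddCommGroup U] [NormedSpace ℂ U]
    [NormedAddCommGroup V] [NormedSpace ℂ V] [NormedAddCommGroup W] [NormedSpace ℂ W]
    (T : U →L[ℂ] V) (S : V →L[ℂ] W)
    (h1 : FiniteDimensional ℂ (LinearMap.ker T.toLinearMap)) (h2 : FiniteDimensional ℂ (LinearMap.ker S.toLinearMap))
    (h3 : FiniteDimensional ℂ (V ⧸ LinearMap.range T.toLinearMap))
    (h4 : FiniteDimensional ℂ (W ⧸ LinearMap.range S.toLinearMap)) :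
    FiniteDimensional ℂ (LinearMap.ker (S.comp T).toLinearMap) ∧
    FiniteDimensional ℂ (W ⧸ LinearMap.range (S.comp T).toLinearMap) ∧
    fredIndex (S.comp T) = fredIndex S + fredIndex T := by
  have hkT : LinearMap.ker (T : U →ₗ[ℂ] V) = LinearMap.ker T.toLinearMap := rfl
  have hkS : LinearMap.ker (S : V →ₗ[ℂ] W) = LinearMap.ker S.toLinearMap := rfl
  have hrT : LinearMap.range (T : U →ₗ[ℂ] V) = LinearMap.range T.toLinearMap := rfl
  have hrS : LinearMap.range (S : V →ₗ[ℂ] W) = LinearMap.range S.toLinearMap := rfl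
  have hkc : LinearMap.ker ((S : V →ₗ[ℂ] W) ∘ₗ (T : U →ₗ[ℂ] V))
      = LinearMap.ker (S.comp T).toLinearMap := rfl
  have hrc : LinearMap.range ((S : V →ₗ[ℂ] W) ∘ₗ (T : U →ₗ[ℂ] V))
      = LinearMap.range (S.comp T).toLinearMap := rfl
  obtain ⟨f1, f2, f3⟩ := index_comp (T : U →ₗ[ℂ] V) (S : V →ₗ[ℂ] W)
    (by rw [hkT]; exact h1) (by rw [hkS]; exact h2)
    (by rw [hrT]; exact h3) (by rw [hrS]; exact h4)
  rw [hkc] at f1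
  rw [hrc] at f2 f3
  refine ⟨f1, f2, ?_⟩
  unfold fredIndex
  rw [hkS, hrS, hkT, hrT] at f3
  exact f3

theorem fd_package {Y Z : Type*} [NormedAddCommGroup Y] [NormedSpace ℂ Y] [CompleteSpace Y]
    [NormedAddCommGroup Z] [NormedSpace ℂ Z] [CompleteSpace Z]
    (A : Y →L[ℂ] Z) (A' : Z →L[ℂ] Y)
    (h1 : IsCompactOperator ⇑(A'.comp A - 1)) (h2 : IsCompactOperator ⇑(A.comp A' - 1)) :
    FiniteDimensional ℂ (LinearMap.ker A.toLinearMap) ∧ FiniteDimensional ℂ (Z ⧸ LinearMap.range A.toLinearMap) := by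
  obtain ⟨hk, -, -⟩ := riesz_index (A'.comp A) h1
  obtain ⟨-, hc, -⟩ := riesz_index (A.comp A') h2
  constructor
  · haveI := hk
    refine Submodule.finiteDimensional_of_le
      (?_ : LinearMap.ker A.toLinearMap ≤ LinearMap.ker (A'.comp A).toLinearMap)
    intro x hx
    have hx' : A x = 0 := hx
    show A' (A x) = 0
    rw [hx', map_zero]
  · refine fd_quot_of_le (?_ : LinearMap.range (A.comp A').toLinearMap ≤ LinearMap.range A.toLinearMap) hc
    rintro y ⟨z, rfl⟩
    exact ⟨A' z, rfl⟩

theorem fredIndex_zero {Y : Type*} [NormedAddCommGroup Y] [NormedSpace ℂ Y] [CompleteSpace Y]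
    (T : Y →L[ℂ] Y) (h : IsCompactOperator ⇑(T - 1)) : fredIndex T = 0 := by
  obtain ⟨-, -, he⟩ := riesz_index T h
  unfold fredIndex
  rw [he, sub_self]

end FredholmAux

/-- Additivity of the relative dimension: `[P - R] = [P - Q] + [Q - R]` for bounded
projectors with compact differences. -/
theorem relDim_add
    {E : Type*} [NormedAddCommGroup E] [NormedSpace ℂ E] [CompleteSpace E]
    (P Q R : E →L[ℂ] E) (hP : P * P = P) (hQ : Q * Q = Q) (hR : R * R = R)
    (hPQ : IsCompactOperator ⇑(P - Q)) (hQR : IsCompactOperator ⇑(Q - R)) :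
    relDim P R = relDim P Q + relDim Q R := by
  classical
  open FredholmAux in
  have hQP : IsCompactOperator ⇑(Q - P) := by
    have h := hPQ.neg
    rwa [show (-⇑(P - Q)) = ⇑(Q - P) by
      funext x; simp [ContinuousLinearMap.sub_apply]] at h
  have hRQ : IsCompactOperator ⇑(R - Q) := by
    have h := hQR.neg
    rwa [show (-⇑(Q - R)) = ⇑(R - Q) by
      funext x; simp [ContinuousLinearMap.sub_apply]] at h
  have hPc := FredholmAux.proj_range_closed P hP
  have hQc := FredholmAux.proj_range_closed Q hQ
  have hRc := FredholmAux.proj_range_closed R hR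
  haveI : CompleteSpace ↥(LinearMap.range P.toLinearMap) := hPc.completeSpace_coe
  haveI : CompleteSpace ↥(LinearMap.range Q.toLinearMap) := hQc.completeSpace_coe
  haveI : CompleteSpace ↥(LinearMap.range R.toLinearMap) := hRc.completeSpace_coe
  set A := projRestrict P Q with hA
  set A' := projRestrict Q P with hA'
  set B := projRestrict Q R with hB
  set B' := projRestrict R Q with hB'
  set C := projRestrict P R with hC
  set S := B.comp A with hS
  set S' := A'.comp B' with hS'
  -- elementary operator identities
  have hQQQ : Q * (Q * Q) = Q := by rw [hQ, hQ]
  -- compactness of the eight quasi-identities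
  have cA'A : IsCompactOperator ⇑(A'.comp A - 1) :=
    FredholmAux.key_compact hP hQP _ (fun x => rfl)
  have cAA' : IsCompactOperator ⇑(A.comp A' - 1) :=
    FredholmAux.key_compact hQ hPQ _ (fun x => rfl)
  have cB'B : IsCompactOperator ⇑(B'.comp B - 1) :=
    FredholmAux.key_compact hQ hRQ _ (fun x => rfl)
  have cBB' : IsCompactOperator ⇑(B.comp B' - 1) :=
    FredholmAux.key_compact hR hQR _ (fun x => rfl)
  have cS'S : IsCompactOperator ⇑(S'.comp S - 1) := by
    apply FredholmAux.key_compact (W := Q * (R * Q)) hP ?_ _ (fun x => rfl)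
    have hop : Q * (R * Q) - P = Q * ((R - Q) * Q) + (Q - P) := by
      rw [sub_mul, mul_sub, hQQQ]
      abel
    rw [hop]
    have h1 : IsCompactOperator (⇑Q ∘ ⇑(R - Q) ∘ ⇑Q) := (hRQ.clm_comp Q).comp_clm Q
    have h2 := h1.add hQP
    rwa [show (⇑Q ∘ ⇑(R - Q) ∘ ⇑Q) + ⇑(Q - P) = ⇑(Q * ((R - Q) * Q) + (Q - P)) from rfl] at h2
  have cSS' : IsCompactOperator ⇑(S.comp S' - 1) := by
    apply FredholmAux.key_compact (W := Q * (P * Q)) hR ?_ _ (fun x => rfl)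
    have hop : Q * (P * Q) - R = Q * ((P - Q) * Q) + (Q - R) := by
      rw [sub_mul, mul_sub, hQQQ]
      abel
    rw [hop]
    have h1 : IsCompactOperator (⇑Q ∘ ⇑(P - Q) ∘ ⇑Q) := (hPQ.clm_comp Q).comp_clm Q
    have h2 := h1.add hQR
    rwa [show (⇑Q ∘ ⇑(P - Q) ∘ ⇑Q) + ⇑(Q - R) = ⇑(Q * ((P - Q) * Q) + (Q - R)) from rfl] at h2
  have cS'C : IsCompactOperator ⇑(S'.comp C - 1) := by
    apply FredholmAux.key_compact (W := Q * R) hP ?_ _ (fun x => rfl)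
    have hop : Q * R - P = Q * (R - Q) + (Q - P) := by
      rw [mul_sub, hQ]
      abel
    rw [hop]
    have h1 : IsCompactOperator (⇑Q ∘ ⇑(R - Q)) := hRQ.clm_comp Q
    have h2 := h1.add hQP
    rwa [show (⇑Q ∘ ⇑(R - Q)) + ⇑(Q - P) = ⇑(Q * (R - Q) + (Q - P)) from rfl] at h2
  have cCS' : IsCompactOperator ⇑(C.comp S' - 1) := by
    apply FredholmAux.key_compact (W := P * Q) hR ?_ _ (fun x => rfl)
    have hop : P * Q - R = (P - Q) * Q + (Q - R) := by
      rw [sub_mul, hQ]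
      abel
    rw [hop]
    have h1 : IsCompactOperator (⇑(P - Q) ∘ ⇑Q) := hPQ.comp_clm Q
    have h2 := h1.add hQR
    rwa [show (⇑(P - Q) ∘ ⇑Q) + ⇑(Q - R) = ⇑((P - Q) * Q + (Q - R)) from rfl] at h2
  -- Fredholm data
  obtain ⟨fkA, fcA⟩ := FredholmAux.fd_package A A' cA'A cAA'
  obtain ⟨fkB, fcB⟩ := FredholmAux.fd_package B B' cB'B cBB'
  obtain ⟨fkS', fcS'⟩ := FredholmAux.fd_package S' S cSS' cS'S
  obtain ⟨fkC, fcC⟩ := FredholmAux.fd_package C S' cS'C cCS'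
  -- index computations
  obtain ⟨fkS, fcS, hSsum⟩ := FredholmAux.index_comp_clm A B fkA fkB fcA fcB
  obtain ⟨-, -, h1⟩ := FredholmAux.index_comp_clm C S' fkC fkS' fcC fcS'
  obtain ⟨-, -, h2⟩ := FredholmAux.index_comp_clm S S' fkS fkS' fcS fcS'
  have hz1 : fredIndex (S'.comp C) = 0 := FredholmAux.fredIndex_zero _ cS'C
  have hz2 : fredIndex (S'.comp S) = 0 := FredholmAux.fredIndex_zero _ cS'S
  show fredIndex C = fredIndex A + fredIndex B
  rw [hS] at h2 hz2
  omega
end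

section
/- Let P and Q be bounded projectors on a Banach space with P - Q compact. Then [P - Q] = [(I - Q) - (I - P)], where [·] denotes the relative dimension. -/
open Module

section Aux

variable {E : Type*} [NormedAddCommGroup E] [NormedSpace ℂ E]

lemma idem_apply (Q : E →L[ℂ] E) (hQ : Q * Q = Q) (x : E) : Q (Q x) = Q x := by
  rw [← ContinuousLinearMap.mul_apply, hQ]

/-- The kernel of `projRestrict P Q` is equivalent to `range P ⊓ ker Q`. -/
noncomputable def kerEquivAux (P Q : E →L[ℂ] E) :
    ↥(LinearMap.ker (projRestrict P Q : ↥(LinearMap.range (P : E →ₗ[ℂ] E)) →ₗ[ℂ] ↥(LinearMap.range (Q : E →ₗ[ℂ] E)))) ≃ₗ[ℂ] ↥(LinearMap.range (P : E →ₗ[ℂ] E) ⊓ LinearMap.ker (Q : E →ₗ[ℂ] E)) where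
  toFun x := ⟨x.1.1, x.1.2, Subtype.ext_iff.mp x.2⟩
  invFun y := ⟨⟨y.1, y.2.1⟩, Subtype.ext y.2.2⟩
  map_add' _ _ := rfl
  map_smul' _ _ := rfl
  left_inv _ := rfl
  right_inv _ := rfl

/-- The cokernel of `projRestrict P Q` is equivalent to `E ⧸ (range P ⊔ ker Q)`. -/
noncomputable def cokerEquivAux (P Q : E →L[ℂ] E) (hQ : Q * Q = Q) :
    (↥(LinearMap.range (Q : E →ₗ[ℂ] E)) ⧸ LinearMap.range (projRestrict P Q : ↥(LinearMap.range (P : E →ₗ[ℂ] E)) →ₗ[ℂ] ↥(LinearMap.range (Q : E →ₗ[ℂ] E)))) ≃ₗ[ℂ]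
      E ⧸ (LinearMap.range (P : E →ₗ[ℂ] E) ⊔ LinearMap.ker (Q : E →ₗ[ℂ] E)) := by
  have hQ' := idem_apply Q hQ
  set N := LinearMap.range (P : E →ₗ[ℂ] E) ⊔ LinearMap.ker (Q : E →ₗ[ℂ] E) with hN
  let φ : ↥(LinearMap.range (Q : E →ₗ[ℂ] E)) →ₗ[ℂ] E ⧸ N := N.mkQ.comp (LinearMap.range (Q : E →ₗ[ℂ] E)).subtype
  have hsurj : Function.Surjective φ := by
    intro z
    obtain ⟨x, rfl⟩ := N.mkQ_surjective z
    refine ⟨⟨Q x, LinearMap.mem_range_self (Q : E →ₗ[ℂ] E) x⟩, ?_⟩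
    show N.mkQ (Q x) = N.mkQ x
    rw [Submodule.mkQ_apply, Submodule.mkQ_apply, Submodule.Quotient.eq]
    exact Submodule.mem_sup_right (by simp [hQ'])
  have hker : LinearMap.ker φ = LinearMap.range (projRestrict P Q : ↥(LinearMap.range (P : E →ₗ[ℂ] E)) →ₗ[ℂ] ↥(LinearMap.range (Q : E →ₗ[ℂ] E))) := by
    ext x
    simp only [LinearMap.mem_ker, LinearMap.mem_range]
    constructor
    · intro h
      have hx : x.1 ∈ N := by
        have : N.mkQ x.1 = 0 := h
        rwa [Submodule.mkQ_apply, Submodule.Quotient.mk_eq_zero] at this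
      rw [hN] at hx
      obtain ⟨p, hp, k, hk, hpk⟩ := Submodule.mem_sup.mp hx
      refine ⟨⟨p, hp⟩, ?_⟩
      ext
      show Q p = x.1
      obtain ⟨y, hy⟩ := x.2
      have hx1 : Q x.1 = x.1 := by rw [← hy]; exact hQ' y
      calc Q p = Q (p + k) := by have hk' : Q k = 0 := LinearMap.mem_ker.mp hk; rw [map_add, hk', add_zero]
        _ = Q x.1 := by rw [hpk]
        _ = x.1 := hx1
    · rintro ⟨p, rfl⟩
      show N.mkQ (Q p.1) = 0
      rw [Submodule.mkQ_apply, Submodule.Quotient.mk_eq_zero]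
      have : Q p.1 = p.1 + (Q p.1 - p.1) := by abel
      rw [this]
      exact Submodule.add_mem_sup p.2 (by simp [hQ'])
  exact (Submodule.quotEquivOfEq _ _ hker.symm).trans (φ.quotKerEquivOfSurjective hsurj)

lemma range_one_sub (Q : E →L[ℂ] E) (hQ : Q * Q = Q) :
    LinearMap.range ((1 - Q : E →L[ℂ] E) : E →ₗ[ℂ] E) = LinearMap.ker (Q : E →ₗ[ℂ] E) := by
  have hQ' := idem_apply Q hQ
  ext x
  constructor
  · rintro ⟨y, rfl⟩
    simp [LinearMap.mem_ker, hQ']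
  · intro hx
    exact ⟨x, by simp [LinearMap.mem_ker.mp hx]⟩

lemma ker_one_sub (P : E →L[ℂ] E) (hP : P * P = P) :
    LinearMap.ker ((1 - P : E →L[ℂ] E) : E →ₗ[ℂ] E) = LinearMap.range (P : E →ₗ[ℂ] E) := by
  have hP' := idem_apply P hP
  ext x
  constructor
  · intro hx
    have h : x - P x = 0 := by simpa using LinearMap.mem_ker.mp hx
    exact ⟨x, (sub_eq_zero.mp h).symm⟩
  · rintro ⟨y, rfl⟩
    simp [LinearMap.mem_ker, hP', sub_eq_zero]

end Aux

/-- For projectors with compact difference, `[P - Q] = [(I - Q) - (I - P)]`. -/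
theorem relDim_complement
    {E : Type*} [NormedAddCommGroup E] [NormedSpace ℂ E] [CompleteSpace E]
    (P Q : E →L[ℂ] E) (hP : P * P = P) (hQ : Q * Q = Q)
    (hPQ : IsCompactOperator ⇑(P - Q)) :
    relDim P Q = relDim (1 - Q) (1 - P) := by
  have h1P : (1 - P) * (1 - P) = 1 - P := by
    have h : (1 - P) * (1 - P) = 1 - P - P + P * P := by noncomm_ring
    rw [h, hP]; abel
  have e1 : LinearMap.range ((1 - Q : E →L[ℂ] E) : E →ₗ[ℂ] E) ⊓ LinearMap.ker ((1 - P : E →L[ℂ] E) : E →ₗ[ℂ] E)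
      = LinearMap.range (P : E →ₗ[ℂ] E) ⊓ LinearMap.ker (Q : E →ₗ[ℂ] E) := by
    rw [range_one_sub Q hQ, ker_one_sub P hP, inf_comm]
  have e2 : LinearMap.range ((1 - Q : E →L[ℂ] E) : E →ₗ[ℂ] E) ⊔ LinearMap.ker ((1 - P : E →L[ℂ] E) : E →ₗ[ℂ] E)
      = LinearMap.range (P : E →ₗ[ℂ] E) ⊔ LinearMap.ker (Q : E →ₗ[ℂ] E) := by
    rw [range_one_sub Q hQ, ker_one_sub P hP, sup_comm]
  unfold relDim fredIndex
  rw [(kerEquivAux P Q).finrank_eq, (cokerEquivAux P Q hQ).finrank_eq,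
    (kerEquivAux (1 - Q) (1 - P)).finrank_eq,
    (cokerEquivAux (1 - Q) (1 - P) h1P).finrank_eq, e1, e2]
end
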